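/- arXiv:0909.3520 — 4 statements merged into one kernel-verified Lean document; each statement's English description precedes it below -/
import Mathlib

section
/- Two distinct left-infinite sequences w = …x_2x_1 and τ = …y_2y_1 in X_k^{−ω} satisfy π(w) = π(τ) if and only if there exist pairwise distinct i, j, l ∈ X_k and an integer r ≥ 0 such that x_s = y_s for all s ≤ r, {x_{r+1}, y_{r+1}} = {i, j}, and x_s = y_s = l for all s ≥ r+2. (Consequently the quotient of X_k^{−ω} by the relation identifying such pairs is homeomorphic to K^{(k)}.) -/
/-!
Setting for the limit-space sections of Makisumi–Stadnyk–Steinhurst: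
`p_0, …, p_{k-1}` are the vertices of a regular simplex in `ℝ^{k-1}`,
`q_i` is the centroid of `{p_j : j ≠ i}`, and `F_i` is the unique affine map
with `F_i (p_i) = p_i` and `F_i (p_j) = q_j` for `j ≠ i`.
-/

namespace HanoiGeo

/-- The `m`-th level cell `F_{x_1}(F_{x_2}( … F_{x_m}(K) … ))` determined by a
left-infinite sequence `… x_2 x_1` over `Fin k` (encoded as `x : ℕ → Fin k`
with `x s = x_{s+1}`); so `cells F K x m = (F_{x_m} ∘ ⋯ ∘ F_{x_1})`-image of
`K` in the sense of the paper, and these sets are nested in `m`. -/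
def cells {k d : ℕ} (F : Fin k → (EuclideanSpace ℝ (Fin d) →ᵃ[ℝ] EuclideanSpace ℝ (Fin d)))
    (K : Set (EuclideanSpace ℝ (Fin d))) : (ℕ → Fin k) → ℕ → Set (EuclideanSpace ℝ (Fin d))
  | _, 0 => K
  | x, m + 1 => F (x 0) '' cells F K (fun n => x (n + 1)) m

set_option maxHeartbeats 1600000 in
/-- fibers of the natural projection `π : X_k^{-ω} → K^{(k)}`.
Two distinct left-infinite sequences have the same image under `π` if and only
if they are of the form `(… l l i v, … l l j v)` with `i, j, l` pairwise
distinct. -/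
theorem pi_fiber_characterization {k : ℕ} (hk : 3 ≤ k)
    (p : Fin k → EuclideanSpace ℝ (Fin (k - 1)))
    (hind : AffineIndependent ℝ p)
    (d : ℝ) (hd : 0 < d) (hdist : ∀ i j, i ≠ j → dist (p i) (p j) = d)
    (q : Fin k → EuclideanSpace ℝ (Fin (k - 1)))
    (hq : ∀ i, q i = Finset.centroid ℝ (Finset.univ.erase i) p)
    (F : Fin k → (EuclideanSpace ℝ (Fin (k - 1)) →ᵃ[ℝ] EuclideanSpace ℝ (Fin (k - 1))))
    (hF : ∀ i, F i (p i) = p i ∧ ∀ j, j ≠ i → F i (p j) = q j)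
    (hcontr : ∀ i, ∃ c : NNReal, c < 1 ∧ LipschitzWith c (F i))
    (K : Set (EuclideanSpace ℝ (Fin (k - 1))))
    (hKne : K.Nonempty) (hKc : IsCompact K) (hKinv : K = ⋃ i, F i '' K)
    (proj : (ℕ → Fin k) → EuclideanSpace ℝ (Fin (k - 1)))
    (hproj : ∀ x : ℕ → Fin k, (⋂ m : ℕ, cells F K x m) = {proj x})
    (x y : ℕ → Fin k) (hxy : x ≠ y) :
    proj x = proj y ↔
      ∃ i j l : Fin k, i ≠ j ∧ i ≠ l ∧ j ≠ l ∧ ∃ r : ℕ,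
        (∀ s, s < r → x s = y s) ∧ ({x r, y r} : Set (Fin k)) = {i, j} ∧
        ∀ s, r + 1 ≤ s → x s = l ∧ y s = l := by
  classical
  haveI : Nonempty (Fin k) := ⟨⟨0, by omega⟩⟩
  have hspan : affineSpan ℝ (Set.range p) = ⊤ := by
    rw [hind.affineSpan_eq_top_iff_card_eq_finrank_add_one]
    rw [Fintype.card_fin, finrank_euclideanSpace_fin]
    omega
  let b : AffineBasis (Fin k) ℝ (EuclideanSpace ℝ (Fin (k - 1))) := ⟨p, hind, hspan⟩
  set co : Fin k → EuclideanSpace ℝ (Fin (k - 1)) → ℝ := fun m z => b.coord m z with hco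
  set κ : ℝ := (k : ℝ) - 1 with hκdef
  have hk3 : (3:ℝ) ≤ (k:ℝ) := by exact_mod_cast hk
  have hκ2 : (2:ℝ) ≤ κ := by rw [hκdef]; linarith
  have hκ0 : κ ≠ 0 := by linarith
  have hcop1 : ∀ m, co m (p m) = 1 := fun m => b.coord_apply_eq m
  have hcop0 : ∀ m j, m ≠ j → co m (p j) = 0 := fun m j h => b.coord_apply_ne h
  have hsum1 : ∀ z, ∑ m, co m z = 1 := fun z => b.sum_coord_apply_eq_one z
  have hext : ∀ z w : EuclideanSpace ℝ (Fin (k - 1)), (∀ m, co m z = co m w) → z = w :=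
    fun z w h => b.ext_elem h
  have hcoqn : ∀ (m j : Fin k), m ≠ j → co m (q j) = 1/κ := by
    intro m j hmj
    have hmem : m ∈ Finset.univ.erase j := Finset.mem_erase.2 ⟨hmj, Finset.mem_univ m⟩
    have hne : (Finset.univ.erase j).Nonempty := ⟨m, hmem⟩
    have hw := Finset.sum_centroidWeights_eq_one_of_nonempty ℝ (Finset.univ.erase j) hne
    rw [hq j, Finset.centroid_def]
    have h1 : co m ((Finset.univ.erase j).affineCombination ℝ p
        ((Finset.univ.erase j).centroidWeights ℝ)) = (Finset.univ.erase j).centroidWeights ℝ m :=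
      b.coord_apply_combination_of_mem hmem hw
    rw [h1, Finset.centroidWeights_apply,
      Finset.card_erase_of_mem (Finset.mem_univ j), Finset.card_univ, Fintype.card_fin, one_div]
    congr 1
    rw [hκdef, Nat.cast_sub (by omega : 1 ≤ k), Nat.cast_one]
  have hcoqe : ∀ j : Fin k, co j (q j) = 0 := by
    intro j
    have hne : (Finset.univ.erase j).Nonempty := by
      obtain ⟨m, hm⟩ := (by have : Nontrivial (Fin k) := Fin.nontrivial_iff_two_le.mpr (by omega); exact exists_ne j)
      exact ⟨m, Finset.mem_erase.2 ⟨hm, Finset.mem_univ m⟩⟩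
    have hw := Finset.sum_centroidWeights_eq_one_of_nonempty ℝ (Finset.univ.erase j) hne
    rw [hq j, Finset.centroid_def]
    exact b.coord_apply_combination_of_notMem (Finset.notMem_erase _ _) hw
  have hmap : ∀ (i m : Fin k) z, co m (F i z) = ∑ j, co j z * co m (F i (p j)) := by
    intro i m z
    have hw1 : (Finset.univ : Finset (Fin k)).sum (fun j => co j z) = 1 := hsum1 z
    have h0 : F i z = Finset.univ.affineCombination ℝ (⇑(F i) ∘ ⇑b) (fun j => co j z) := by
      conv_lhs => rw [← b.affineCombination_coord_eq_self z]
      exact Finset.map_affineCombination _ _ _ hw1 (F i)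
    have h1 : co m (F i z) =
        Finset.univ.affineCombination ℝ (⇑(b.coord m) ∘ (⇑(F i) ∘ ⇑b)) (fun j => co j z) := by
      rw [hco]
      rw [h0]
      exact Finset.map_affineCombination _ _ _ hw1 (b.coord m)
    rw [h1, Finset.univ.affineCombination_eq_linear_combination _ _ hw1]
    rfl
  have keyB : ∀ (i : Fin k) z, κ * co i (F i z) = (κ - 1) * co i z + 1 := by
    intro i z
    rw [hmap i i z]
    rw [← Finset.add_sum_erase Finset.univ (fun j => co j z * co i (F i (p j)))
      (Finset.mem_univ i)]
    have h1 : co i (F i (p i)) = 1 := by rw [(hF i).1]; exact hcop1 i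
    have h2 : ∀ j ∈ Finset.univ.erase i, co j z * co i (F i (p j)) = co j z * (1/κ) := by
      intro j hj
      have hji : j ≠ i := Finset.ne_of_mem_erase hj
      rw [(hF i).2 j hji, hcoqn i j (fun h => hji h.symm)]
    rw [Finset.sum_congr rfl h2, ← Finset.sum_mul]
    have h3 : ∑ j ∈ Finset.univ.erase i, co j z = 1 - co i z := by
      have h4 := Finset.add_sum_erase Finset.univ (fun j => co j z) (Finset.mem_univ i)
      have h5 := hsum1 z
      linarith [h4.trans h5]
    rw [h1, h3]
    field_simp
    ring
  have keyA : ∀ (i : Fin k) z m, m ≠ i → κ * co m (F i z) = 1 - co m z - co i z := by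
    intro i z m hmi
    rw [hmap i m z]
    rw [← Finset.add_sum_erase Finset.univ (fun j => co j z * co m (F i (p j)))
      (Finset.mem_univ i)]
    have hmem : m ∈ Finset.univ.erase i := Finset.mem_erase.2 ⟨hmi, Finset.mem_univ m⟩
    rw [← Finset.add_sum_erase (Finset.univ.erase i) (fun j => co j z * co m (F i (p j))) hmem]
    have h1 : co m (F i (p i)) = 0 := by rw [(hF i).1]; exact hcop0 m i hmi
    have h2 : co m (F i (p m)) = 0 := by
      rw [(hF i).2 m hmi]; exact hcoqe m
    have h3 : ∀ j ∈ (Finset.univ.erase i).erase m,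
        co j z * co m (F i (p j)) = co j z * (1/κ) := by
      intro j hj
      have hjm : j ≠ m := Finset.ne_of_mem_erase hj
      have hji : j ≠ i := Finset.ne_of_mem_erase (Finset.mem_of_mem_erase hj)
      rw [(hF i).2 j hji, hcoqn m j (fun h => hjm h.symm)]
    rw [Finset.sum_congr rfl h3, ← Finset.sum_mul]
    have h4 : ∑ j ∈ (Finset.univ.erase i).erase m, co j z = 1 - co i z - co m z := by
      have h5 := Finset.add_sum_erase (Finset.univ.erase i) (fun j => co j z) hmem
      have h6 := Finset.add_sum_erase Finset.univ (fun j => co j z) (Finset.mem_univ i)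
      have h7 := hsum1 z
      linarith [h6.trans h7]
    rw [h1, h2, h4]
    field_simp
    ring
  have hKmem : ∀ a ∈ K, ∃ i, ∃ u ∈ K, F i u = a := by
    intro a ha
    rw [hKinv] at ha
    obtain ⟨i, u, hu, he⟩ := Set.mem_iUnion.1 ha
    exact ⟨i, u, hu, he⟩
  -- nonnegativity of coordinates on K
  have hmin : ∀ m : Fin k, ∃ z ∈ K, ∀ u ∈ K, co m z ≤ co m u := by
    intro m
    have hcont : ContinuousOn (co m) K :=
      ((b.coord m).continuous_of_finiteDimensional).continuousOn
    obtain ⟨z, hzK, hz⟩ := hKc.exists_isMinOn hKne hcont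
    exact ⟨z, hzK, fun u hu => hz hu⟩
  choose zmin hzminK hzmin using hmin
  have hμne : (Finset.univ : Finset (Fin k)).Nonempty := Finset.univ_nonempty
  set μ : ℝ := Finset.univ.inf' hμne (fun m => co m (zmin m)) with hμdef
  have hμle : ∀ (m : Fin k), ∀ u ∈ K, μ ≤ co m u := by
    intro m u hu
    exact le_trans (Finset.inf'_le _ (Finset.mem_univ m)) (hzmin m u hu)
  have hμ0 : 0 ≤ μ := by
    by_contra hneg
    push_neg at hneg
    obtain ⟨m, -, hm⟩ := Finset.exists_mem_eq_inf' hμne (fun m => co m (zmin m))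
    obtain ⟨i, u, huK, hFu⟩ := hKmem (zmin m) (hzminK m)
    by_cases hmi : m = i
    · subst hmi
      have h1 : κ * co m (zmin m) = (κ - 1) * co m u + 1 := by rw [← hFu]; exact keyB m u
      have h2 : μ ≤ co m u := hμle m u huK
      rw [← hm] at h1
      nlinarith [h1, h2, hκ2, hneg]
    · have h1 : κ * co m (zmin m) = 1 - co m u - co i u := by
        rw [← hFu]; exact keyA i u m hmi
      rw [← hm] at h1
      have hmemi : i ∈ Finset.univ.erase m := Finset.mem_erase.2 ⟨fun h => hmi h.symm, Finset.mem_univ i⟩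
      have hcard : ((Finset.univ.erase m).erase i).card = k - 2 := by
        rw [Finset.card_erase_of_mem hmemi, Finset.card_erase_of_mem (Finset.mem_univ m),
          Finset.card_univ, Fintype.card_fin]
        omega
      have hrest : ((k:ℝ) - 2) * μ ≤ ∑ c ∈ (Finset.univ.erase m).erase i, co c u := by
        have h6 := Finset.card_nsmul_le_sum ((Finset.univ.erase m).erase i)
          (fun c => co c u) μ (fun c _ => hμle c u huK)
        rw [hcard, nsmul_eq_mul, Nat.cast_sub (by omega : 2 ≤ k)] at h6
        simpa using h6
      have hsplit : co m u + (co i u + ∑ c ∈ (Finset.univ.erase m).erase i, co c u) = 1 := by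
        have h7 := Finset.add_sum_erase (Finset.univ.erase m) (fun c => co c u) hmemi
        have h8 := Finset.add_sum_erase Finset.univ (fun c => co c u) (Finset.mem_univ m)
        have h9 := hsum1 u
        rw [h7, h8, h9]
      rw [hκdef] at h1
      nlinarith [h1, hrest, hsplit, hneg]
  have hnn : ∀ u ∈ K, ∀ m, 0 ≤ co m u := fun u hu m => le_trans hμ0 (hμle m u hu)
  have hle1 : ∀ u ∈ K, ∀ m, co m u ≤ 1 := by
    intro u hu m
    have h1 := Finset.add_sum_erase Finset.univ (fun c => co c u) (Finset.mem_univ m)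
    have h2 := hsum1 u
    have h3 : (0:ℝ) ≤ ∑ c ∈ Finset.univ.erase m, co c u :=
      Finset.sum_nonneg (fun c _ => hnn u hu c)
    linarith [h1.trans h2]
  -- injectivity
  have hinj : ∀ i : Fin k, Function.Injective (F i) := by
    intro i a c h
    have hi : co i a = co i c := by
      have h1 := keyB i a
      have h2 := keyB i c
      rw [h] at h1
      have h3 : (κ - 1) * (co i a - co i c) = 0 := by linarith
      have h4 : κ - 1 ≠ 0 := by linarith
      have := mul_eq_zero.1 h3
      rcases this with h5 | h5
      · exact absurd h5 h4
      · linarith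
    apply hext
    intro m
    by_cases hmi : m = i
    · subst hmi; exact hi
    · have h1 := keyA i a m hmi
      have h2 := keyA i c m hmi
      rw [h] at h1
      linarith
  -- points of K with two vanishing coordinates are vertices
  have hvert : ∀ (i j : Fin k), i ≠ j → ∀ a ∈ K, co i a = 0 → co j a = 0 →
      ∃ c, c ≠ i ∧ c ≠ j ∧ a = p c := by
    intro i j hij a haK hai haj
    obtain ⟨c, u, huK, hcu⟩ := hKmem a haK
    have hcpos : 0 < co c a := by
      have h1 : κ * co c a = (κ - 1) * co c u + 1 := by rw [← hcu]; exact keyB c u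
      nlinarith [hnn u huK c, hκ2]
    have hci : c ≠ i := fun h => by rw [h, hai] at hcpos; exact lt_irrefl 0 hcpos
    have hcj : c ≠ j := fun h => by rw [h, haj] at hcpos; exact lt_irrefl 0 hcpos
    have h1 : co i u + co c u = 1 := by
      have := keyA c u i (Ne.symm hci)
      rw [hcu, hai] at this
      linarith
    have h2 : co j u + co c u = 1 := by
      have := keyA c u j (Ne.symm hcj)
      rw [hcu, haj] at this
      linarith
    have hsum3 : co i u + co j u + co c u ≤ 1 := by
      have hsub : ({i, j, c} : Finset (Fin k)) ⊆ Finset.univ := Finset.subset_univ _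
      have h3 := Finset.sum_le_sum_of_subset_of_nonneg hsub
        (fun m _ _ => hnn u huK m)
      rw [hsum1 u] at h3
      have hn1 : i ∉ ({j, c} : Finset (Fin k)) := by
        simp only [Finset.mem_insert, Finset.mem_singleton]
        push_neg
        exact ⟨hij, Ne.symm hci⟩
      have hn2 : j ∉ ({c} : Finset (Fin k)) := by
        simp only [Finset.mem_singleton]
        exact Ne.symm hcj
      rw [Finset.sum_insert hn1, Finset.sum_insert hn2, Finset.sum_singleton] at h3
      linarith
    have hcu1 : co c u = 1 := by
      have := hle1 u huK c
      linarith
    have hupc : u = p c := by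
      apply hext
      intro m
      by_cases hmc : m = c
      · subst hmc; rw [hcu1, hcop1]
      · rw [hcop0 m c hmc]
        have hz : ∑ mm ∈ Finset.univ.erase c, co mm u = 0 := by
          have h5 := Finset.add_sum_erase Finset.univ (fun mm => co mm u) (Finset.mem_univ c)
          have h6 := hsum1 u
          rw [hcu1] at h5
          linarith [h5.trans h6]
        exact (Finset.sum_eq_zero_iff_of_nonneg (fun mm _ => hnn u huK mm)).1 hz m
          (Finset.mem_erase.2 ⟨hmc, Finset.mem_univ m⟩)
    exact ⟨c, hci, hcj, by rw [← hcu, hupc, (hF c).1]⟩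
  -- collisions between distinct first letters
  have hcollide : ∀ i j : Fin k, i ≠ j → ∀ a ∈ K, ∀ c ∈ K, F i a = F j c →
      ∃ m, m ≠ i ∧ m ≠ j ∧ a = p m ∧ c = p m := by
    intro i j hij a haK c hcK h
    have e1 := keyA i a j (fun hh => hij hh.symm)
    have e2 := keyB j c
    rw [h] at e1
    have hz1 : co j a = 0 ∧ co i a = 0 ∧ co j c = 0 := by
      have n1 := hnn a haK j
      have n2 := hnn a haK i
      have n3 := hnn c hcK j
      have hprod : 0 ≤ (κ - 1) * co j c := mul_nonneg (by linarith) n3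
      have heq : co j a + co i a + (κ - 1) * co j c = 0 := by linarith
      refine ⟨by linarith, by linarith, ?_⟩
      nlinarith [heq, hκ2, n1, n2, n3]
    obtain ⟨hja, hia, hjc⟩ := hz1
    have hic : co i c = 0 := by
      have e3 := keyA j c i hij
      have e4 := keyB i a
      rw [h] at e4
      rw [hia] at e4
      have n4 := hnn c hcK i
      linarith
    have hac : a = c := by
      apply hext
      intro m
      by_cases hmi : m = i
      · subst hmi; rw [hia, hic]
      · by_cases hmj : m = j
        · subst hmj; rw [hja, hjc]
        · have e5 := keyA i a m hmi
          have e6 := keyA j c m hmj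
          rw [h] at e5
          rw [hia] at e5
          rw [hjc] at e6
          linarith
    obtain ⟨m, hmi, hmj, hpm⟩ := hvert i j hij a haK hia hja
    exact ⟨m, hmi, hmj, hpm, hac ▸ hpm⟩
  -- basic facts about proj
  have hprojK : ∀ z : ℕ → Fin k, proj z ∈ K := by
    intro z
    have h : proj z ∈ ⋂ m, cells F K z m := by rw [hproj z]; exact rfl
    exact Set.mem_iInter.1 h 0
  have hFK : ∀ i : Fin k, ∀ a ∈ K, F i a ∈ K := by
    intro i a ha
    rw [hKinv]
    exact Set.mem_iUnion.2 ⟨i, Set.mem_image_of_mem _ ha⟩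
  have hrec : ∀ z : ℕ → Fin k, proj z = F (z 0) (proj (fun n => z (n+1))) := by
    intro z
    have hmem : F (z 0) (proj (fun n => z (n+1))) ∈ ⋂ m, cells F K z m := by
      apply Set.mem_iInter.2
      intro m
      cases m with
      | zero => exact hFK _ _ (hprojK _)
      | succ m =>
        show F (z 0) _ ∈ F (z 0) '' cells F K (fun n => z (n+1)) m
        refine Set.mem_image_of_mem _ ?_
        have h : proj (fun n => z (n+1)) ∈ ⋂ m, cells F K (fun n => z (n+1)) m := by
          rw [hproj]; exact rfl
        exact Set.mem_iInter.1 h m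
    rw [hproj z] at hmem
    exact hmem.symm
  have hfix : ∀ i : Fin k, proj (fun _ => i) = p i := by
    intro i
    have h1 : proj (fun _ => i) = F i (proj (fun _ => i)) := hrec (fun _ => i)
    obtain ⟨c, hc1, hlip⟩ := hcontr i
    have hd := hlip.dist_le_mul (proj (fun _ => i)) (p i)
    rw [← h1, (hF i).1] at hd
    have hc1' : (c:ℝ) < 1 := hc1
    have hd0 : (0:ℝ) ≤ dist (proj (fun _ => i)) (p i) := dist_nonneg
    have hdz : dist (proj (fun _ => i)) (p i) = 0 := by nlinarith
    exact dist_eq_zero.1 hdz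
  have haddr0 : ∀ m : Fin k, ∀ z : ℕ → Fin k, proj z = p m → z 0 = m := by
    intro m z hz
    by_contra hz0
    have h1 := hrec z
    rw [hz] at h1
    have h2 : κ * co m (p m) =
        1 - co m (proj (fun n => z (n+1))) - co (z 0) (proj (fun n => z (n+1))) := by
      rw [h1]; exact keyA (z 0) _ m (fun h => hz0 h.symm)
    rw [hcop1] at h2
    have hK1 := hnn _ (hprojK (fun n => z (n+1))) m
    have hK2 := hnn _ (hprojK (fun n => z (n+1))) (z 0)
    linarith
  have haddr : ∀ m : Fin k, ∀ s : ℕ, ∀ z : ℕ → Fin k, proj z = p m → z s = m := by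
    intro m s
    induction s with
    | zero => exact haddr0 m
    | succ s ih =>
      intro z hz
      have h0 : z 0 = m := haddr0 m z hz
      have h1 := hrec z
      rw [hz, h0] at h1
      have h2 : F m (proj (fun n => z (n+1))) = F m (p m) := by
        rw [(hF m).1]; exact h1.symm
      exact ih (fun n => z (n+1)) (hinj m h2)
  have hstrip : ∀ r : ℕ, ∀ x y : ℕ → Fin k, proj x = proj y → (∀ s, s < r → x s = y s) →
      x r ≠ y r → ∃ l, l ≠ x r ∧ l ≠ y r ∧ ∀ s, r + 1 ≤ s → x s = l ∧ y s = l := by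
    intro r
    induction r with
    | zero =>
      intro x y hpq hpre hne
      have h1 := hrec x
      have h2 := hrec y
      rw [hpq, h2] at h1
      obtain ⟨m, hmy, hmx, ha, hb⟩ := hcollide (y 0) (x 0) (Ne.symm hne) _ (hprojK _) _
        (hprojK _) h1
      refine ⟨m, hmx, hmy, ?_⟩
      intro s hs
      obtain ⟨t, rfl⟩ : ∃ t, s = t + 1 := ⟨s - 1, by omega⟩
      exact ⟨haddr m t _ hb, haddr m t _ ha⟩
    | succ r ih =>
      intro x y hpq hpre hne
      have h0 : x 0 = y 0 := hpre 0 (by omega)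
      have h1 := hrec x
      have h2 := hrec y
      rw [hpq, h2, ← h0] at h1
      have hps : proj (fun n => x (n+1)) = proj (fun n => y (n+1)) := hinj (x 0) h1.symm
      obtain ⟨l, hl1, hl2, hl3⟩ := ih (fun n => x (n+1)) (fun n => y (n+1)) hps
        (fun s hs => hpre (s+1) (by omega)) hne
      refine ⟨l, hl1, hl2, ?_⟩
      intro s hs
      obtain ⟨t, rfl⟩ : ∃ t, s = t + 1 := ⟨s - 1, by omega⟩
      exact hl3 t (by omega)
  have hpref : ∀ r : ℕ, ∀ x y : ℕ → Fin k, (∀ s, s < r → x s = y s) →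
      proj (fun n => x (n + r)) = proj (fun n => y (n + r)) → proj x = proj y := by
    intro r
    induction r with
    | zero => intro x y _ h; exact h
    | succ r ih =>
      intro x y hpre h
      rw [hrec x, hrec y, hpre 0 (by omega)]
      congr 1
      apply ih (fun n => x (n+1)) (fun n => y (n+1)) (fun s hs => hpre (s+1) (by omega))
      exact h
  constructor
  · intro hpq
    have hex : ∃ s, x s ≠ y s := by
      by_contra hall
      push_neg at hall
      exact hxy (funext hall)
    have hrne : x (Nat.find hex) ≠ y (Nat.find hex) := Nat.find_spec hex
    have hrpre : ∀ s, s < Nat.find hex → x s = y s :=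
      fun s hs => not_ne_iff.1 (Nat.find_min hex hs)
    obtain ⟨l, hl1, hl2, hl3⟩ := hstrip (Nat.find hex) x y hpq hrpre hrne
    exact ⟨x (Nat.find hex), y (Nat.find hex), l, hrne, Ne.symm hl1, Ne.symm hl2,
      Nat.find hex, hrpre, rfl, hl3⟩
  · rintro ⟨i, j, l, hij, hil, hjl, r, hpre, hset, htail⟩
    have hxm : x r ∈ ({i, j} : Set (Fin k)) := by
      rw [← hset]; exact Set.mem_insert _ _
    have hym : y r ∈ ({i, j} : Set (Fin k)) := by
      rw [← hset]; exact Set.mem_insert_of_mem _ rfl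
    have hxl : l ≠ x r := by
      rcases hxm with h | h
      · rw [h]; exact Ne.symm hil
      · rw [Set.mem_singleton_iff] at h; rw [h]; exact Ne.symm hjl
    have hyl : l ≠ y r := by
      rcases hym with h | h
      · rw [h]; exact Ne.symm hil
      · rw [Set.mem_singleton_iff] at h; rw [h]; exact Ne.symm hjl
    apply hpref r x y hpre
    rw [hrec (fun n => x (n + r)), hrec (fun n => y (n + r))]
    have e0x : (0:ℕ) + r = r := by omega
    have ex : (fun n => x ((n + r) + 1)) = (fun _ => l) := by
      funext n
      exact (htail (n + r + 1) (by omega)).1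
    have ey : (fun n => y ((n + r) + 1)) = (fun _ => l) := by
      funext n
      exact (htail (n + r + 1) (by omega)).2
    show F (x (0 + r)) (proj (fun n => x ((n + 1) + r))) =
      F (y (0 + r)) (proj (fun n => y ((n + 1) + r)))
    have ex' : (fun n => x ((n + 1) + r)) = (fun _ => l) := by
      funext n; exact (htail (n + 1 + r) (by omega)).1
    have ey' : (fun n => y ((n + 1) + r)) = (fun _ => l) := by
      funext n; exact (htail (n + 1 + r) (by omega)).2
    rw [e0x, ex', ey', hfix l, (hF (x r)).2 l hxl, (hF (y r)).2 l hyl]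


end HanoiGeo
end

section
/- The critical set C := π^{−1}(⋃_{i≠j} (F_i(K^{(k)}) ∩ F_j(K^{(k)}))) equals the set of sequences …llli with i, l ∈ X_k, i ≠ l (i.e. x_1 = i and x_s = l for all s ≥ 2). Moreover, with σ : X_k^{−ω} → X_k^{−ω} the shift σ(…x_3x_2x_1) = …x_3x_2, the postcritical set P := ⋃_{n≥1} σ^n(C) equals the set of the k constant sequences {…lll : l ∈ X_k}; in particular P is finite, so the self-similar structure (K^{(k)}, X_k, {F_i}) is post-critically finite. -/
/-!
Setting for the limit-space sections of Makisumi–Stadnyk–Steinhurst: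
`p_0, …, p_{k-1}` are the vertices of a regular simplex in `ℝ^{k-1}`,
`q_i` is the centroid of `{p_j : j ≠ i}`, and `F_i` is the unique affine map
with `F_i (p_i) = p_i` and `F_i (p_j) = q_j` for `j ≠ i`.
-/

namespace HanoiGeo

section Aux

open Finset

variable {k : ℕ}

private abbrev E (k : ℕ) := EuclideanSpace ℝ (Fin (k - 1))

set_option linter.unusedSectionVars false

lemma coord_map (b : AffineBasis (Fin k) ℝ (E k)) (G : E k →ᵃ[ℝ] E k) (m : Fin k) (x : E k) :
    b.coord m (G x) = ∑ j, b.coord j x * b.coord m (G (b j)) := by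
  calc b.coord m (G x)
      = ((b.coord m).comp G) (Finset.univ.affineCombination ℝ b fun j => b.coord j x) := by
        rw [b.affineCombination_coord_eq_self x]; rfl
    _ = Finset.univ.affineCombination ℝ (((b.coord m).comp G) ∘ ⇑b) (fun j => b.coord j x) :=
        Finset.map_affineCombination _ _ _ (b.sum_coord_apply_eq_one x) _
    _ = ∑ j, b.coord j x * b.coord m (G (b j)) := by
        rw [Finset.univ.affineCombination_eq_linear_combination _ _ (b.sum_coord_apply_eq_one x)]
        simp [AffineMap.comp_apply, smul_eq_mul]

lemma coord_q (hk : 3 ≤ k) (b : AffineBasis (Fin k) ℝ (E k)) {p q : Fin k → E k}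
    (hb : ∀ i, b i = p i) (hq : ∀ i, q i = Finset.centroid ℝ (Finset.univ.erase i) p)
    (m j : Fin k) :
    b.coord m (q j) = if m = j then 0 else ((k : ℝ) - 1)⁻¹ := by
  have hcard : ((Finset.univ.erase j).card : ℝ) = (k : ℝ) - 1 := by
    rw [Finset.card_erase_of_mem (Finset.mem_univ j), Finset.card_univ, Fintype.card_fin]
    have : 1 ≤ k := by omega
    push_cast [Nat.cast_sub this]; ring
  have hne : (Finset.univ.erase j).Nonempty := by
    rw [← Finset.card_pos, Finset.card_erase_of_mem (Finset.mem_univ j), Finset.card_univ,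
      Fintype.card_fin]; omega
  have hw := (Finset.univ.erase j).sum_centroidWeights_eq_one_of_nonempty ℝ hne
  rw [hq, Finset.centroid_def, Finset.map_affineCombination _ _ _ hw (b.coord m),
    Finset.affineCombination_eq_linear_combination _ _ _ hw]
  have : ∀ i ∈ Finset.univ.erase j,
      Finset.centroidWeights ℝ (Finset.univ.erase j) i • ((b.coord m) ∘ p) i
        = if m = i then ((k:ℝ)-1)⁻¹ else 0 := by
    intro i _
    simp only [Finset.centroidWeights_apply, Function.comp_apply, ← hb i, b.coord_apply,
      smul_eq_mul, hcard, mul_ite, mul_one, mul_zero]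
  rw [Finset.sum_congr rfl this, Finset.sum_ite_eq (Finset.univ.erase j) m]
  by_cases hmj : m = j
  · simp [hmj]
  · simp [Finset.mem_erase, hmj]

lemma mem_hull_iff (b : AffineBasis (Fin k) ℝ (E k)) {p : Fin k → E k}
    (hb : ∀ i, b i = p i) (x : E k) :
    x ∈ convexHull ℝ (Set.range p) ↔ ∀ m, 0 ≤ b.coord m x := by
  have hbp : ⇑b = p := funext hb
  constructor
  · intro hx m
    have hsub : Set.range p ⊆ (b.coord m) ⁻¹' (Set.Ici 0) := by
      rintro _ ⟨j, rfl⟩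
      simp only [Set.mem_preimage, Set.mem_Ici, ← hb j, b.coord_apply]
      split <;> norm_num
    exact convexHull_min hsub ((convex_Ici (0:ℝ)).affine_preimage (b.coord m)) hx
  · intro h
    have := affineCombination_mem_convexHull (s := Finset.univ) (v := ⇑b)
      (w := fun j => b.coord j x) (fun i _ => h i) (b.sum_coord_apply_eq_one x)
    rwa [b.affineCombination_coord_eq_self x, hbp] at this

lemma coord_le_one (b : AffineBasis (Fin k) ℝ (E k)) {x : E k}
    (h : ∀ m, 0 ≤ b.coord m x) (i : Fin k) : b.coord i x ≤ 1 := by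
  have h1 := b.sum_coord_apply_eq_one x
  have : ∑ j ∈ ({i} : Finset (Fin k)), b.coord j x ≤ ∑ j, b.coord j x :=
    Finset.sum_le_sum_of_subset_of_nonneg (Finset.subset_univ _) (fun j _ _ => h j)
  rw [Finset.sum_singleton, h1] at this
  exact this

lemma coord_pair_le_one (b : AffineBasis (Fin k) ℝ (E k)) {x : E k}
    (h : ∀ m, 0 ≤ b.coord m x) {i m : Fin k} (him : i ≠ m) :
    b.coord i x + b.coord m x ≤ 1 := by
  have h1 := b.sum_coord_apply_eq_one x
  have : ∑ j ∈ ({i, m} : Finset (Fin k)), b.coord j x ≤ ∑ j, b.coord j x :=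
    Finset.sum_le_sum_of_subset_of_nonneg (Finset.subset_univ _) (fun j _ _ => h j)
  rwa [Finset.sum_pair him, h1] at this

lemma coords_eq_single (b : AffineBasis (Fin k) ℝ (E k)) {p : Fin k → E k}
    (hb : ∀ i, b i = p i) {x : E k} {l : Fin k}
    (h : ∀ m, b.coord m x = if m = l then 1 else 0) : x = p l := by
  refine b.ext_elem fun m => ?_
  rw [h m, ← hb l, b.coord_apply]

section Core
variable (hk : 3 ≤ k) (b : AffineBasis (Fin k) ℝ (E k)) {p q : Fin k → E k}
  (hb : ∀ i, b i = p i) (hq : ∀ i, q i = Finset.centroid ℝ (Finset.univ.erase i) p)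
  {F : Fin k → (E k →ᵃ[ℝ] E k)}
  (hF : ∀ i, F i (p i) = p i ∧ ∀ j, j ≠ i → F i (p j) = q j)

include hk hb hq hF

lemma coord_F (i m : Fin k) (x : E k) :
    b.coord m (F i x) = if m = i then
        b.coord i x + (1 - b.coord i x) * ((k : ℝ) - 1)⁻¹
      else (1 - b.coord i x - b.coord m x) * ((k : ℝ) - 1)⁻¹ := by
  set c0 : ℝ := ((k : ℝ) - 1)⁻¹ with hc0
  set t : Fin k → ℝ := fun j => b.coord j x with ht
  have hsum : ∑ j, t j = 1 := b.sum_coord_apply_eq_one x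
  have key : ∀ j, b.coord m (F i (b j)) =
      if j = i then (if m = i then 1 else 0) else (if m = j then 0 else c0) := by
    intro j
    by_cases hj : j = i
    · subst hj
      rw [hb j, (hF j).1, ← hb j, b.coord_apply, if_pos rfl]
    · rw [hb j, (hF i).2 j hj, coord_q hk b hb hq, if_neg hj]
  rw [coord_map b (F i) m x]
  by_cases hmi : m = i
  · subst hmi
    rw [if_pos rfl]
    have hstep : ∀ j ∈ Finset.univ, b.coord j x * b.coord m (F m (b j))
        = t j * c0 + (if j = m then t m * (1 - c0) else 0) := by
      intro j _
      rw [key j]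
      by_cases hj : j = m
      · subst hj; rw [if_pos rfl, if_pos rfl, if_pos rfl]; ring
      · rw [if_neg hj, if_neg (fun h : m = j => hj h.symm), if_neg hj]; ring
    rw [Finset.sum_congr rfl hstep, Finset.sum_add_distrib, ← Finset.sum_mul, hsum,
      Finset.sum_ite_eq' Finset.univ m, if_pos (Finset.mem_univ m)]
    show _ = t m + (1 - t m) * c0
    ring
  · rw [if_neg hmi]
    have hstep : ∀ j ∈ Finset.univ, b.coord j x * b.coord m (F i (b j))
        = t j * c0 - (if j = i then t i * c0 else 0) - (if j = m then t m * c0 else 0) := by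
      intro j _
      rw [key j]
      by_cases hj : j = i
      · subst hj
        rw [if_pos rfl, if_neg hmi, if_pos rfl, if_neg (fun h : j = m => hmi h.symm)]
        ring
      · rw [if_neg hj]
        by_cases hjm : j = m
        · subst hjm
          rw [if_pos rfl, if_pos rfl, if_neg hj]; ring
        · rw [if_neg (fun h : m = j => hjm h.symm), if_neg hj, if_neg hjm]; ring
    rw [Finset.sum_congr rfl hstep, Finset.sum_sub_distrib, Finset.sum_sub_distrib,
      ← Finset.sum_mul, hsum, Finset.sum_ite_eq' Finset.univ i, Finset.sum_ite_eq' Finset.univ m,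
      if_pos (Finset.mem_univ i), if_pos (Finset.mem_univ m)]
    show _ = (1 - t i - t m) * c0
    ring

omit hb hq hF in
lemma c0_facts : 0 < ((k : ℝ) - 1)⁻¹ ∧ ((k : ℝ) - 1)⁻¹ < 1 := by
  have h3 : (3 : ℝ) ≤ (k : ℝ) := by exact_mod_cast hk
  constructor
  · exact inv_pos.mpr (by linarith)
  · rw [inv_lt_one_iff₀]; right; linarith

lemma F_fixes_p {a l : Fin k} {y : E k} (hy : ∀ m, 0 ≤ b.coord m y)
    (heq : F a y = p l) : a = l ∧ y = p l := by
  obtain ⟨hc0, hc1⟩ := c0_facts hk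
  set c0 : ℝ := ((k : ℝ) - 1)⁻¹ with hc0def
  have hmul : ∀ {A : ℝ}, A * c0 = 0 → A = 0 := by
    intro A h
    rcases mul_eq_zero.mp h with h | h
    · exact h
    · exact absurd h (ne_of_gt hc0)
  have hco : ∀ m, b.coord m (F a y) = if m = l then 1 else 0 := by
    intro m; rw [heq, ← hb l, b.coord_apply]
  have hal : a = l := by
    by_contra hal
    have h := hco l
    rw [coord_F hk b hb hq hF a l y, if_neg (fun h : l = a => hal h.symm),
      if_pos rfl] at h
    have h1 := hy a; have h2 := hy l
    have hle : (1 - b.coord a y - b.coord l y) * c0 ≤ 1 * c0 :=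
      mul_le_mul_of_nonneg_right (by linarith) (le_of_lt hc0)
    rw [h] at hle
    linarith
  subst hal
  have hta : b.coord a y = 1 := by
    have h := hco a
    rw [coord_F hk b hb hq hF a a y, if_pos rfl, if_pos rfl] at h
    have h2 : (1 - b.coord a y) * (1 - c0) = 0 := by linear_combination -h
    rcases mul_eq_zero.mp h2 with h3 | h3
    · linarith
    · linarith
  refine ⟨rfl, coords_eq_single b hb fun m => ?_⟩
  by_cases hm : m = a
  · rw [if_pos hm, hm, hta]
  · rw [if_neg hm]
    have h := hco m
    rw [coord_F hk b hb hq hF a m y, if_neg hm, if_neg hm, hta] at h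
    have h2 : (- b.coord m y) * c0 = 0 := by linear_combination h
    have := hmul h2
    linarith

lemma F_hits_q {a l : Fin k} {y : E k} (hy : ∀ m, 0 ≤ b.coord m y)
    (heq : F a y = q l) : a ≠ l ∧ y = p l := by
  obtain ⟨hc0, hc1⟩ := c0_facts hk
  set c0 : ℝ := ((k : ℝ) - 1)⁻¹ with hc0def
  have hmul : ∀ {A : ℝ}, A * c0 = 0 → A = 0 := by
    intro A h
    rcases mul_eq_zero.mp h with h | h
    · exact h
    · exact absurd h (ne_of_gt hc0)
  have hco : ∀ m, b.coord m (F a y) = if m = l then 0 else c0 := by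
    intro m; rw [heq, coord_q hk b hb hq]
  have hal : a ≠ l := by
    intro hal; subst hal
    have h := hco a
    rw [coord_F hk b hb hq hF a a y, if_pos rfl, if_pos rfl] at h
    have h1 := hy a
    have h2 := coord_le_one b hy a
    nlinarith [mul_nonneg h1 (by linarith : (0:ℝ) ≤ 1 - c0)]
  have hta : b.coord a y = 0 := by
    have h := hco a
    rw [coord_F hk b hb hq hF a a y, if_pos rfl, if_neg hal] at h
    have h2 : b.coord a y * (1 - c0) = 0 := by linear_combination h
    rcases mul_eq_zero.mp h2 with h3 | h3
    · exact h3
    · linarith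
  refine ⟨hal, coords_eq_single b hb fun m => ?_⟩
  by_cases hm : m = l
  · subst hm
    rw [if_pos rfl]
    have h := hco m
    rw [coord_F hk b hb hq hF a m y, if_neg (fun h' : m = a => hal h'.symm),
      if_pos rfl, hta] at h
    have h2 : (1 - b.coord m y) * c0 = 0 := by linear_combination h
    have := hmul h2
    linarith
  · rw [if_neg hm]
    by_cases hma : m = a
    · rw [hma, hta]
    · have h := hco m
      rw [coord_F hk b hb hq hF a m y, if_neg hma, if_neg hm, hta] at h
      have h2 : (- b.coord m y) * c0 = 0 := by linear_combination h
      have := hmul h2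
      linarith

lemma F_meet {i j : Fin k} (hij : i ≠ j) {y z : E k}
    (hy : ∀ m, 0 ≤ b.coord m y) (hz : ∀ m, 0 ≤ b.coord m z)
    (heq : F i y = F j z) : b.coord i y = 0 ∧ b.coord j y = 0 := by
  obtain ⟨hc0, hc1⟩ := c0_facts hk
  set c0 : ℝ := ((k : ℝ) - 1)⁻¹ with hc0def
  have hmul : ∀ {A : ℝ}, A * c0 = 0 → A = 0 := by
    intro A h
    rcases mul_eq_zero.mp h with h | h
    · exact h
    · exact absurd h (ne_of_gt hc0)
  have hi : b.coord i y = 0 ∧ b.coord i z + b.coord j z = 0 := by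
    have h1 : b.coord i (F i y) = b.coord i (F j z) := by rw [heq]
    rw [coord_F hk b hb hq hF i i y, if_pos rfl,
      coord_F hk b hb hq hF j i z, if_neg hij] at h1
    have e : b.coord i y * (1 - c0) + (b.coord i z + b.coord j z) * c0 = 0 := by
      linear_combination h1
    have A : 0 ≤ b.coord i y * (1 - c0) := mul_nonneg (hy i) (by linarith)
    have B : 0 ≤ (b.coord i z + b.coord j z) * c0 :=
      mul_nonneg (by linarith [hz i, hz j]) (le_of_lt hc0)
    have A0 : b.coord i y * (1 - c0) = 0 := by linarith
    have B0 : (b.coord i z + b.coord j z) * c0 = 0 := by linarith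
    constructor
    · rcases mul_eq_zero.mp A0 with h | h
      · exact h
      · linarith
    · exact hmul B0
  have hzj : b.coord j z = 0 := by have := hz i; have := hz j; linarith [hi.2]
  have hj : b.coord j y = 0 := by
    have h1 : b.coord j (F i y) = b.coord j (F j z) := by rw [heq]
    rw [coord_F hk b hb hq hF i j y, if_neg (Ne.symm hij),
      coord_F hk b hb hq hF j j z, if_pos rfl, hzj] at h1
    have e : (b.coord i y + b.coord j y) * c0 = 0 := by linear_combination -h1
    have := hmul e
    linarith [hi.1, hy j]
  exact ⟨hi.1, hj⟩

lemma F_maps_hull (i : Fin k) {x : E k} (hx : ∀ m, 0 ≤ b.coord m x) :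
    ∀ m, 0 ≤ b.coord m (F i x) := by
  obtain ⟨hc0, hc1⟩ := c0_facts hk
  intro m
  rw [coord_F hk b hb hq hF i m x]
  by_cases hm : m = i
  · subst hm
    rw [if_pos rfl]
    have h1 := hx m
    have h2 := coord_le_one b hx m
    nlinarith
  · rw [if_neg hm]
    have : b.coord i x + b.coord m x ≤ 1 :=
      coord_pair_le_one b hx (fun h : i = m => hm h.symm)
    have := hx i; have := hx m
    nlinarith

/-- The coordinate `a` of a point of `F a '' hull` is strictly positive. -/
lemma coord_F_self_pos (a : Fin k) {w : E k} (hw : ∀ m, 0 ≤ b.coord m w) :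
    0 < b.coord a (F a w) := by
  obtain ⟨hc0, hc1⟩ := c0_facts hk
  rw [coord_F hk b hb hq hF a a w, if_pos rfl]
  have h1 := hw a
  have h2 := coord_le_one b hw a
  nlinarith

/-- If two of the three coordinate relations pin `w` to a vertex. -/
lemma face_point {w : E k} (hw : ∀ m, 0 ≤ b.coord m w) {a i j : Fin k}
    (hai : a ≠ i) (haj : a ≠ j) (hij : i ≠ j)
    (h1 : b.coord a w + b.coord i w = 1) (h2 : b.coord a w + b.coord j w = 1) :
    w = p a := by
  have hsum := b.sum_coord_apply_eq_one w
  have hpair : ∑ r ∈ ({a, i} : Finset (Fin k)), b.coord r w = 1 := by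
    rw [Finset.sum_pair hai]; exact h1
  have hsd : ∑ r ∈ Finset.univ \ ({a, i} : Finset (Fin k)), b.coord r w = 0 := by
    have := Finset.sum_sdiff (Finset.subset_univ ({a, i} : Finset (Fin k)))
      (f := fun r => b.coord r w)
    rw [hpair, hsum] at this
    linarith
  have hzero : ∀ r ∈ Finset.univ \ ({a, i} : Finset (Fin k)), b.coord r w = 0 :=
    (Finset.sum_eq_zero_iff_of_nonneg (fun r _ => hw r)).mp hsd
  have hj0 : b.coord j w = 0 := by
    refine hzero j ?_
    simp only [Finset.mem_sdiff, Finset.mem_univ, Finset.mem_insert, Finset.mem_singleton,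
      true_and]
    push_neg
    exact ⟨Ne.symm haj, Ne.symm hij⟩
  have ha1 : b.coord a w = 1 := by linarith
  refine coords_eq_single b hb fun m => ?_
  by_cases hm : m = a
  · rw [if_pos hm, hm, ha1]
  · rw [if_neg hm]
    by_cases hmi : m = i
    · rw [hmi]; linarith
    · refine hzero m ?_
      simp only [Finset.mem_sdiff, Finset.mem_univ, Finset.mem_insert, Finset.mem_singleton,
        true_and]
      push_neg
      exact ⟨hm, hmi⟩

end Core

lemma K_subset_hull (hk : 3 ≤ k) {p : Fin k → E k}
    {F : Fin k → (E k →ᵃ[ℝ] E k)}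
    (hcontr : ∀ i, ∃ c : NNReal, c < 1 ∧ LipschitzWith c (F i))
    (hmaps : ∀ i, ∀ x ∈ convexHull ℝ (Set.range p), F i x ∈ convexHull ℝ (Set.range p))
    {K : Set (E k)} (hKne : K.Nonempty) (hKc : IsCompact K)
    (hKinv : K = ⋃ i, F i '' K) :
    K ⊆ convexHull ℝ (Set.range p) := by
  set Δ := convexHull ℝ (Set.range p) with hΔ
  have hΔc : IsCompact Δ := (Set.finite_range p).isCompact_convexHull ℝ
  have hΔcl : IsClosed Δ := hΔc.isClosed
  have hΔne : Δ.Nonempty := by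
    have : 0 < k := by omega
    exact ⟨p ⟨0, this⟩, subset_convexHull ℝ _ (Set.mem_range_self _)⟩
  obtain ⟨x0, hx0K, hmax'⟩ := hKc.exists_isMaxOn hKne
    (Metric.continuous_infDist_pt Δ).continuousOn
  have hmax : ∀ y ∈ K, Metric.infDist y Δ ≤ Metric.infDist x0 Δ := fun y hy => hmax' hy
  have hzero : Metric.infDist x0 Δ = 0 := by
    have hx0' : x0 ∈ ⋃ i, F i '' K := hKinv ▸ hx0K
    obtain ⟨_, ⟨i, rfl⟩, y, hyK, hyF⟩ := hx0'
    obtain ⟨c, hc1, hlip⟩ := hcontr i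
    obtain ⟨z, hzΔ, hdz⟩ := hΔc.exists_infDist_eq_dist hΔne y
    have h1 : Metric.infDist x0 Δ ≤ dist (F i y) (F i z) := by
      rw [← hyF]
      exact Metric.infDist_le_dist_of_mem (hmaps i z hzΔ)
    have h2 : dist (F i y) (F i z) ≤ (c : ℝ) * dist y z := hlip.dist_le_mul y z
    have h3 : (c : ℝ) * dist y z = (c : ℝ) * Metric.infDist y Δ := by rw [hdz]
    have h4 : Metric.infDist y Δ ≤ Metric.infDist x0 Δ := hmax y hyK
    have hcnn : (0 : ℝ) ≤ (c : ℝ) := c.coe_nonneg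
    have hclt : (c : ℝ) < 1 := hc1
    have hnn : 0 ≤ Metric.infDist x0 Δ := Metric.infDist_nonneg
    nlinarith
  intro x hxK
  have : Metric.infDist x Δ = 0 := by
    have h1 := hmax x hxK
    have h2 : 0 ≤ Metric.infDist x Δ := Metric.infDist_nonneg
    linarith [hzero]
  exact (hΔcl.mem_iff_infDist_zero hΔne).mpr this

section CellsK
variable {F : Fin k → (E k →ᵃ[ℝ] E k)} {K : Set (E k)}

lemma FK_sub (hKinv : K = ⋃ i, F i '' K) (i : Fin k) : F i '' K ⊆ K := by
  rw [hKinv]; exact Set.subset_iUnion_of_subset i (by rw [← hKinv])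

lemma cells_sub_K (hKinv : K = ⋃ i, F i '' K) :
    ∀ (m : ℕ) (x : ℕ → Fin k), cells F K x m ⊆ K := by
  intro m
  induction m with
  | zero => intro x; exact subset_rfl
  | succ m ih =>
    intro x
    calc cells F K x (m+1) = F (x 0) '' cells F K (fun n => x (n+1)) m := rfl
      _ ⊆ F (x 0) '' K := Set.image_mono (ih _)
      _ ⊆ K := FK_sub hKinv (x 0)

lemma proj_mem_cells {proj : (ℕ → Fin k) → E k}
    (hproj : ∀ x : ℕ → Fin k, (⋂ m : ℕ, cells F K x m) = {proj x})
    (x : ℕ → Fin k) (m : ℕ) : proj x ∈ cells F K x m := by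
  have : proj x ∈ ⋂ m : ℕ, cells F K x m := by rw [hproj x]; exact rfl
  exact Set.mem_iInter.mp this m

lemma p_mem_K {p q : Fin k → E k}
    (hF : ∀ i, F i (p i) = p i ∧ ∀ j, j ≠ i → F i (p j) = q j)
    (hcontr : ∀ i, ∃ c : NNReal, c < 1 ∧ LipschitzWith c (F i))
    (hKinv : K = ⋃ i, F i '' K)
    {proj : (ℕ → Fin k) → E k}
    (hproj : ∀ x : ℕ → Fin k, (⋂ m : ℕ, cells F K x m) = {proj x})
    (l : Fin k) : p l ∈ K := by
  set z := proj (fun _ => l) with hz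
  have hzK : z ∈ K := proj_mem_cells hproj (fun _ => l) 0
  have hFz : F l z ∈ ⋂ m : ℕ, cells F K (fun _ => l) m := by
    refine Set.mem_iInter.mpr fun m => ?_
    cases m with
    | zero => exact FK_sub hKinv l ⟨z, hzK, rfl⟩
    | succ m =>
      show F l z ∈ F l '' cells F K (fun _ => l) m
      exact ⟨z, proj_mem_cells hproj (fun _ => l) m, rfl⟩
  rw [hproj (fun _ => l)] at hFz
  have hfix : F l z = z := hFz
  obtain ⟨c, hc1, hlip⟩ := hcontr l
  have hd : dist (p l) z ≤ (c : ℝ) * dist (p l) z := by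
    calc dist (p l) z = dist (F l (p l)) (F l z) := by rw [(hF l).1, hfix]
      _ ≤ (c : ℝ) * dist (p l) z := hlip.dist_le_mul _ _
  have hdnn : 0 ≤ dist (p l) z := dist_nonneg
  have hclt : (c : ℝ) < 1 := hc1
  have : dist (p l) z = 0 := by nlinarith
  rw [dist_eq_zero] at this
  rw [this]
  exact hzK

end CellsK

lemma exists_third (hk : 3 ≤ k) (i l : Fin k) : ∃ j : Fin k, j ≠ i ∧ j ≠ l := by
  by_contra h
  push_neg at h
  have hsub : (Finset.univ : Finset (Fin k)) ⊆ ({i, l} : Finset (Fin k)) := by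
    intro j _
    simp only [Finset.mem_insert, Finset.mem_singleton]
    by_cases hj : j = i
    · exact Or.inl hj
    · exact Or.inr (h j hj)
  have h1 : (Finset.univ : Finset (Fin k)).card ≤ ({i, l} : Finset (Fin k)).card :=
    Finset.card_le_card hsub
  have h2 : ({i, l} : Finset (Fin k)).card ≤ 2 := by
    calc ({i, l} : Finset (Fin k)).card ≤ ({l} : Finset (Fin k)).card + 1 :=
          Finset.card_insert_le i {l}
      _ = 2 := by rw [Finset.card_singleton]
  rw [Finset.card_univ, Fintype.card_fin] at h1
  omega

end Aux

/-- the self-similar structure `(K^{(k)}, X_k, {F_i})` is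
post-critically finite.
The critical set `C = π⁻¹(⋃_{i≠j} F_i(K) ∩ F_j(K))` consists exactly of the
sequences `… l l l i` with `i ≠ l`; the postcritical set
`P = ⋃_{n ≥ 1} σ^n(C)` (σ the shift) consists exactly of the `k` constant
sequences; in particular `P` is finite. -/
theorem post_critically_finite {k : ℕ} (hk : 3 ≤ k)
    (p : Fin k → EuclideanSpace ℝ (Fin (k - 1)))
    (hind : AffineIndependent ℝ p)
    (d : ℝ) (hd : 0 < d) (hdist : ∀ i j, i ≠ j → dist (p i) (p j) = d)
    (q : Fin k → EuclideanSpace ℝ (Fin (k - 1)))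
    (hq : ∀ i, q i = Finset.centroid ℝ (Finset.univ.erase i) p)
    (F : Fin k → (EuclideanSpace ℝ (Fin (k - 1)) →ᵃ[ℝ] EuclideanSpace ℝ (Fin (k - 1))))
    (hF : ∀ i, F i (p i) = p i ∧ ∀ j, j ≠ i → F i (p j) = q j)
    (hcontr : ∀ i, ∃ c : NNReal, c < 1 ∧ LipschitzWith c (F i))
    (K : Set (EuclideanSpace ℝ (Fin (k - 1))))
    (hKne : K.Nonempty) (hKc : IsCompact K) (hKinv : K = ⋃ i, F i '' K)
    (proj : (ℕ → Fin k) → EuclideanSpace ℝ (Fin (k - 1)))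
    (hproj : ∀ x : ℕ → Fin k, (⋂ m : ℕ, cells F K x m) = {proj x}) :
    proj ⁻¹' (⋃ i, ⋃ j, ⋃ (_ : i ≠ j), ((F i '' K) ∩ (F j '' K))) =
      {x : ℕ → Fin k | ∃ i l : Fin k, i ≠ l ∧ x 0 = i ∧ ∀ s, 1 ≤ s → x s = l} ∧
    (⋃ n : ℕ, ⋃ (_ : 1 ≤ n),
        (fun (x : ℕ → Fin k) (s : ℕ) => x (s + n)) ''
          (proj ⁻¹' (⋃ i, ⋃ j, ⋃ (_ : i ≠ j), ((F i '' K) ∩ (F j '' K))))) =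
      {x : ℕ → Fin k | ∃ l : Fin k, ∀ s, x s = l} ∧
    Set.Finite {x : ℕ → Fin k | ∃ l : Fin k, ∀ s, x s = l} := by
  classical
  -- an affine basis from the vertices of the simplex
  have hcard : Fintype.card (Fin k) = Module.finrank ℝ (EuclideanSpace ℝ (Fin (k - 1))) + 1 := by
    rw [Fintype.card_fin, finrank_euclideanSpace_fin]
    omega
  have htot : affineSpan ℝ (Set.range p) = ⊤ :=
    hind.affineSpan_eq_top_iff_card_eq_finrank_add_one.mpr hcard
  let b : AffineBasis (Fin k) ℝ (EuclideanSpace ℝ (Fin (k - 1))) := ⟨p, hind, htot⟩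
  have hb : ∀ i, b i = p i := fun i => rfl
  have hmaps : ∀ i, ∀ x ∈ convexHull ℝ (Set.range p), F i x ∈ convexHull ℝ (Set.range p) := by
    intro i x hx
    exact (mem_hull_iff b hb _).mpr (F_maps_hull hk b hb hq hF i ((mem_hull_iff b hb x).mp hx))
  have hKsub : K ⊆ convexHull ℝ (Set.range p) := K_subset_hull hk hcontr hmaps hKne hKc hKinv
  have hKnn : ∀ y ∈ K, ∀ m, 0 ≤ b.coord m y := fun y hy => (mem_hull_iff b hb y).mp (hKsub hy)
  obtain ⟨hc0, hc1⟩ := c0_facts hk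
  -- if the vertex `p l` lies in an `(r+1)`-cell, the first `r+1` letters are all `l`
  have hchain : ∀ (l : Fin k) (r : ℕ) (y : ℕ → Fin k),
      p l ∈ cells F K y (r+1) → ∀ s, s ≤ r → y s = l := by
    intro l r
    induction r with
    | zero =>
      intro y hy s hs
      obtain ⟨w, hw, hwF⟩ := (show p l ∈ F (y 0) '' K from hy)
      have h := F_fixes_p hk b hb hq hF (hKnn w hw) hwF
      have hs0 : s = 0 := by omega
      rw [hs0]; exact h.1
    | succ r ih =>
      intro y hy s hs
      obtain ⟨w, hw, hwF⟩ :=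
        (show p l ∈ F (y 0) '' cells F K (fun n => y (n+1)) (r+1) from hy)
      have hwK : w ∈ K := cells_sub_K hKinv _ _ hw
      have h := F_fixes_p hk b hb hq hF (hKnn w hwK) hwF
      rcases Nat.eq_zero_or_pos s with hs0 | hs1
      · rw [hs0]; exact h.1
      · obtain ⟨s', rfl⟩ : ∃ s', s = s' + 1 := ⟨s - 1, by omega⟩
        have hp : p l ∈ cells F K (fun n => y (n+1)) (r+1) := h.2 ▸ hw
        exact ih (fun n => y (n+1)) hp s' (by omega)
  -- first claim: the critical set
  have hC : proj ⁻¹' (⋃ i, ⋃ j, ⋃ (_ : i ≠ j), ((F i '' K) ∩ (F j '' K))) =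
      {x : ℕ → Fin k | ∃ i l : Fin k, i ≠ l ∧ x 0 = i ∧ ∀ s, 1 ≤ s → x s = l} := by
    ext x
    simp only [Set.mem_preimage, Set.mem_iUnion, Set.mem_inter_iff, Set.mem_setOf_eq]
    constructor
    · rintro ⟨i, j, hij, ⟨y, hyK, hyF⟩, ⟨z, hzK, hzF⟩⟩
      have heq : F i y = F j z := hyF.trans hzF.symm
      obtain ⟨hiy, hjy⟩ := F_meet hk b hb hq hF hij (hKnn y hyK) (hKnn z hzK) heq
      obtain ⟨_, ⟨a, rfl⟩, w, hwK, hwF⟩ := (show y ∈ ⋃ i, F i '' K from hKinv ▸ hyK)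
      have hai : a ≠ i := by
        intro h; subst h
        have hpos := coord_F_self_pos hk b hb hq hF a (hKnn w hwK)
        rw [hwF] at hpos
        linarith
      have haj : a ≠ j := by
        intro h; subst h
        have hpos := coord_F_self_pos hk b hb hq hF a (hKnn w hwK)
        rw [hwF] at hpos
        linarith
      have e1 : b.coord a w + b.coord i w = 1 := by
        have h : b.coord i (F a w) = b.coord i y := by rw [hwF]
        rw [coord_F hk b hb hq hF a i w, if_neg (fun h' : i = a => hai h'.symm), hiy] at h
        have h2 : (1 - b.coord a w - b.coord i w) = 0 := by
          rcases mul_eq_zero.mp h with h3 | h3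
          · exact h3
          · exact absurd h3 (ne_of_gt hc0)
        linarith
      have e2 : b.coord a w + b.coord j w = 1 := by
        have h : b.coord j (F a w) = b.coord j y := by rw [hwF]
        rw [coord_F hk b hb hq hF a j w, if_neg (fun h' : j = a => haj h'.symm), hjy] at h
        have h2 : (1 - b.coord a w - b.coord j w) = 0 := by
          rcases mul_eq_zero.mp h with h3 | h3
          · exact h3
          · exact absurd h3 (ne_of_gt hc0)
        linarith
      have hwpa : w = p a := face_point hk b hb hq hF (hKnn w hwK) hai haj hij e1 e2
      have hypa : y = p a := by rw [← hwF, hwpa, (hF a).1]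
      have hprojq : proj x = q a := by
        rw [← hyF, hypa]
        exact (hF i).2 a hai
      have hqcell : ∀ r, q a ∈ cells F K x r := fun r => hprojq ▸ proj_mem_cells hproj x r
      have hstep : ∀ s : ℕ, q a ∈ cells F K x (s+1) →
          x 0 ≠ a ∧ p a ∈ cells F K (fun n => x (n+1)) s := by
        intro s hs
        obtain ⟨w', hw', hwF'⟩ :=
          (show q a ∈ F (x 0) '' cells F K (fun n => x (n+1)) s from hs)
        have hw'K : w' ∈ K := cells_sub_K hKinv _ _ hw'
        have h := F_hits_q hk b hb hq hF (hKnn w' hw'K) hwF'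
        exact ⟨h.1, h.2 ▸ hw'⟩
      refine ⟨x 0, a, (hstep 0 (hqcell 1)).1, rfl, ?_⟩
      intro s hs
      obtain ⟨s', rfl⟩ : ∃ s', s = s' + 1 := ⟨s - 1, by omega⟩
      have hp := (hstep (s'+1) (hqcell (s'+2))).2
      exact hchain a s' (fun n => x (n+1)) hp s' le_rfl
    · rintro ⟨i, l, hil, hx0, hxs⟩
      have hpl : p l ∈ K := p_mem_K hF hcontr hKinv hproj l
      have hql : F i (p l) = q l := (hF i).2 l (Ne.symm hil)
      have hconst : ∀ (r : ℕ) (y : ℕ → Fin k), (∀ s, y s = l) → p l ∈ cells F K y r := by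
        intro r
        induction r with
        | zero => intro y _; exact hpl
        | succ r ih =>
          intro y hy
          show p l ∈ F (y 0) '' cells F K (fun n => y (n+1)) r
          exact ⟨p l, ih _ (fun s => hy (s+1)), by rw [hy 0]; exact (hF l).1⟩
      have hqc : ∀ r, q l ∈ cells F K x r := by
        intro r
        cases r with
        | zero => exact FK_sub hKinv i ⟨p l, hpl, hql⟩
        | succ r =>
          show q l ∈ F (x 0) '' cells F K (fun n => x (n+1)) r
          refine ⟨p l, hconst r _ (fun s => hxs (s+1) (by omega)), ?_⟩
          rw [hx0]; exact hql
      have hprojq : proj x = q l := by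
        have hmem : q l ∈ ⋂ m : ℕ, cells F K x m := Set.mem_iInter.mpr hqc
        rw [hproj x] at hmem
        exact hmem.symm
      obtain ⟨j, hji, hjl⟩ := exists_third hk i l
      refine ⟨i, j, Ne.symm hji, ⟨p l, hpl, ?_⟩, ⟨p l, hpl, ?_⟩⟩
      · show F i (p l) = proj x
        rw [hql, hprojq]
      · show F j (p l) = proj x
        rw [(hF j).2 l (Ne.symm hjl), hprojq]
  refine ⟨hC, ?_, ?_⟩
  · rw [hC]
    ext y
    simp only [Set.mem_iUnion, Set.mem_image, Set.mem_setOf_eq]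
    constructor
    · rintro ⟨n, hn, x, ⟨i, l, hil, hx0, hxs⟩, rfl⟩
      exact ⟨l, fun s => hxs (s + n) (by omega)⟩
    · rintro ⟨l, hy⟩
      obtain ⟨i, _, hi⟩ := exists_third hk l l
      refine ⟨1, le_rfl, (fun s => if s = 0 then i else l), ⟨i, l, hi, if_pos rfl,
        fun s hs => if_neg (by omega)⟩, ?_⟩
      funext s
      show (if s + 1 = 0 then i else l) = y s
      rw [if_neg (Nat.succ_ne_zero s), hy s]
  · have hsub : {x : ℕ → Fin k | ∃ l : Fin k, ∀ s, x s = l} ⊆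
        Set.range (fun l : Fin k => (fun _ : ℕ => l)) := by
      rintro x ⟨l, hl⟩
      exact ⟨l, (funext fun s => (hl s).symm : (fun _ : ℕ => l) = x)⟩
    exact (Set.finite_range _).subset hsub

end HanoiGeo
end

section
/- For every a ∈ ℝ^k, the minimum over x ∈ ℝ^k of E₁(a, x) equals (k(k−2)/(k²−k−1))·E₀(a), and this minimum is attained precisely at the point x given by x_i = ((k−1)·A − a_i)/(k²−k−1) for each i, where A = Σ_{j=0}^{k−1} a_j. (This solves the renormalization problem for the level-1 graph energy of K^{(k)} with all conductances equal to 1, giving renormalization factor r = k(k−2)/(k²−k−1).) -/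
/-!
The renormalization problem for the level-1 graph energy on `K^{(k)}` with all
conductances equal to `1` (Makisumi–Stadnyk–Steinhurst, Theorem 4.?).
-/

namespace HanoiGeo

/-- `E₀(a) = Σ_{0 ≤ i < j ≤ k-1} (a_i - a_j)²`. -/
def energy0 (k : ℕ) (a : Fin k → ℝ) : ℝ :=
  ∑ p ∈ Finset.univ.filter (fun p : Fin k × Fin k => p.1 < p.2), (a p.1 - a p.2) ^ 2

/-- `E₁(a, x) = (k-2) · Σ_{0 ≤ i < j ≤ k-1} (x_i - x_j)² + Σ_{i ≠ j} (x_i - a_j)²`,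
the second sum running over ordered pairs of distinct indices. -/
def energy1 (k : ℕ) (a x : Fin k → ℝ) : ℝ :=
  (k - 2 : ℝ) * energy0 k x +
    ∑ p ∈ Finset.univ.filter (fun p : Fin k × Fin k => p.1 ≠ p.2), (x p.1 - a p.2) ^ 2

open Finset

private lemma two_mul_sum_lt {k : ℕ} (f : Fin k × Fin k → ℝ) (hs : ∀ i j, f (i,j) = f (j,i))
    (hd : ∀ i, f (i,i) = 0) :
    2 * ∑ p ∈ Finset.univ.filter (fun p : Fin k × Fin k => p.1 < p.2), f p
      = ∑ i, ∑ j, f (i, j) := by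
  have h1 : ∑ p ∈ Finset.univ.filter (fun p : Fin k × Fin k => p.1 < p.2), f p
      = ∑ p ∈ Finset.univ.filter (fun p : Fin k × Fin k => p.2 < p.1), f p := by
    refine Finset.sum_nbij' (fun p => Prod.swap p) (fun p => Prod.swap p) ?_ ?_ ?_ ?_ ?_ <;>
       intro p hp <;> simp_all
    rw [← hs]; rfl
  have h2 : ∑ p ∈ Finset.univ.filter (fun p : Fin k × Fin k => ¬ (p.1 < p.2 ∨ p.2 < p.1)), f p = 0 := by
    apply Finset.sum_eq_zero
    intro p hp
    simp only [mem_filter, not_or, not_lt] at hp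
    have : p.1 = p.2 := le_antisymm hp.2.2 hp.2.1
    calc f p = f (p.1, p.2) := rfl
    _ = 0 := by rw [this]; exact hd _
  have h3 := Finset.sum_filter_add_sum_filter_not Finset.univ
    (fun p : Fin k × Fin k => p.1 < p.2 ∨ p.2 < p.1) f
  have h4 : ∑ p ∈ Finset.univ.filter (fun p : Fin k × Fin k => p.1 < p.2 ∨ p.2 < p.1), f p
      = ∑ p ∈ Finset.univ.filter (fun p : Fin k × Fin k => p.1 < p.2), f p
      + ∑ p ∈ Finset.univ.filter (fun p : Fin k × Fin k => p.2 < p.1), f p := by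
    rw [Finset.filter_or, Finset.sum_union]
    simp only [Finset.disjoint_left, mem_filter, mem_univ, true_and]
    intro p hp1 hp2
    exact absurd (hp1.trans hp2) (lt_irrefl _)
  have h5 : ∑ p : Fin k × Fin k, f p = ∑ i, ∑ j, f (i, j) := by
    rw [← Fintype.sum_prod_type]
  rw [← h5, ← h3, h4, h2, ← h1]; ring

private lemma energy0_eq {k : ℕ} (y : Fin k → ℝ) :
    energy0 k y = k * (∑ i, y i ^ 2) - (∑ i, y i) ^ 2 := by
  have h := two_mul_sum_lt (fun p : Fin k × Fin k => (y p.1 - y p.2)^2)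
    (fun i j => by ring) (fun i => by ring)
  have h2 : ∑ i, ∑ j : Fin k, (y i - y j)^2
      = 2 * ((k : ℝ) * (∑ i, y i ^ 2) - (∑ i, y i) ^ 2) := by
    simp only [sub_sq, Finset.sum_add_distrib, Finset.sum_sub_distrib, Finset.sum_const,
      Finset.card_univ, Fintype.card_fin, nsmul_eq_mul, Finset.mul_sum, Finset.sum_mul]
    have key : ∑ x : Fin k, ∑ x1 : Fin k, 2 * y x * y x1 = 2 * (∑ i, y i) ^ 2 := by
      calc ∑ x : Fin k, ∑ x1 : Fin k, 2 * y x * y x1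
          = ∑ x : Fin k, (2 * y x) * ∑ x1 : Fin k, y x1 :=
            Finset.sum_congr rfl fun x _ => (Finset.mul_sum _ _ _).symm
        _ = (∑ x : Fin k, 2 * y x) * ∑ x1 : Fin k, y x1 := (Finset.sum_mul _ _ _).symm
        _ = (2 * ∑ x : Fin k, y x) * ∑ x1 : Fin k, y x1 := by rw [← Finset.mul_sum]
        _ = 2 * (∑ i, y i) ^ 2 := by ring
    rw [key]
    ring
  simp only [energy0]
  linarith [h]

private lemma sum_offdiag {k : ℕ} (g : Fin k × Fin k → ℝ) :
    ∑ p ∈ Finset.univ.filter (fun p : Fin k × Fin k => p.1 ≠ p.2), g p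
      = (∑ i, ∑ j, g (i, j)) - ∑ i, g (i, i) := by
  have h3 := Finset.sum_filter_add_sum_filter_not Finset.univ
    (fun p : Fin k × Fin k => p.1 ≠ p.2) g
  have h4 : ∑ p ∈ Finset.univ.filter (fun p : Fin k × Fin k => ¬ p.1 ≠ p.2), g p
      = ∑ i, g (i, i) := by
    refine Finset.sum_nbij' (fun p => p.1) (fun i => (i, i)) ?_ ?_ ?_ ?_ ?_ <;>
      intro p hp <;> obtain ⟨p1, p2⟩ := p <;> simp_all
  have h5 : ∑ p : Fin k × Fin k, g p = ∑ i, ∑ j, g (i, j) := by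
    rw [← Fintype.sum_prod_type]
  linarith [h3, h4, h5]

private lemma sum_sq_sub {k : ℕ} (u v : Fin k → ℝ) :
    ∑ i, (u i - v i)^2 = ∑ i, u i^2 - 2*∑ i, u i * v i + ∑ i, v i^2 := by
  simp only [sub_sq, mul_assoc, Finset.sum_add_distrib, Finset.sum_sub_distrib, ← Finset.mul_sum]

private lemma double_sum_sq {k : ℕ} (u v : Fin k → ℝ) :
    ∑ i, ∑ j, (u i - v j)^2
      = (k:ℝ)*(∑ i, u i^2) - 2*(∑ i, u i)*(∑ i, v i) + (k:ℝ)*(∑ i, v i^2) := by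
  have inner : ∀ i, ∑ j, (u i - v j)^2
      = (k:ℝ)*u i^2 - (2*(∑ j, v j))*u i + ∑ j, v j^2 := by
    intro i
    simp only [sub_sq, Finset.sum_add_distrib, Finset.sum_sub_distrib, Finset.sum_const,
      Finset.card_univ, Fintype.card_fin, nsmul_eq_mul, ← Finset.mul_sum]
    ring
  rw [Finset.sum_congr rfl fun i _ => inner i]
  simp only [Finset.sum_add_distrib, Finset.sum_sub_distrib, ← Finset.mul_sum,
    Finset.sum_const, Finset.card_univ, Fintype.card_fin, nsmul_eq_mul]
  ring

private lemma sum_comb {k : ℕ} (c1 c2 c3 c4 c5 c6 : ℝ) (u1 u2 u3 u4 u5 : Fin k → ℝ) :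
    ∑ i, (c1*u1 i + c2*u2 i + c3*u3 i + c4*u4 i + c5*u5 i + c6)
      = c1*(∑ i, u1 i) + c2*(∑ i, u2 i) + c3*(∑ i, u3 i) + c4*(∑ i, u4 i)
        + c5*(∑ i, u5 i) + (k:ℝ)*c6 := by
  simp only [Finset.sum_add_distrib, ← Finset.mul_sum, Finset.sum_const,
    Finset.card_univ, Fintype.card_fin, nsmul_eq_mul]

private lemma key_identity {k : ℕ} (hD : ((k:ℝ)^2 - (k:ℝ) - 1) ≠ 0) (a x : Fin k → ℝ) :
    energy1 k a x
      = (k:ℝ)*((k:ℝ)-2)/((k:ℝ)^2-(k:ℝ)-1) * energy0 k a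
        + ((k:ℝ)-2) * energy0 k
            (fun i => x i - (((k:ℝ)-1)*(∑ j, a j) - a i)/((k:ℝ)^2-(k:ℝ)-1))
        + ((k:ℝ)-1) *
            ∑ i, (x i - (((k:ℝ)-1)*(∑ j, a j) - a i)/((k:ℝ)^2-(k:ℝ)-1))^2 := by
  have h0x := energy0_eq x
  have h0a := energy0_eq a
  have h0y : energy0 k (fun i => x i - (((k:ℝ)-1)*(∑ j, a j) - a i)/((k:ℝ)^2-(k:ℝ)-1))
      = k * (∑ i, (x i - (((k:ℝ)-1)*(∑ j, a j) - a i)/((k:ℝ)^2-(k:ℝ)-1)) ^ 2)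
        - (∑ i, (x i - (((k:ℝ)-1)*(∑ j, a j) - a i)/((k:ℝ)^2-(k:ℝ)-1))) ^ 2 :=
    energy0_eq _
  have hoff : ∑ p ∈ Finset.univ.filter (fun p : Fin k × Fin k => p.1 ≠ p.2),
        (x p.1 - a p.2) ^ 2
      = (∑ i, ∑ j, (x i - a j)^2) - ∑ i, (x i - a i)^2 :=
    sum_offdiag _
  have hdd := double_sum_sq x a
  have hss := sum_sq_sub x a
  have hy1 : ∑ i, (x i - (((k:ℝ)-1)*(∑ j, a j) - a i)/((k:ℝ)^2-(k:ℝ)-1))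
      = (∑ i, x i) - ((k:ℝ)*(((k:ℝ)-1)*(∑ j, a j)) - (∑ j, a j))/((k:ℝ)^2-(k:ℝ)-1) := by
    have hterm : ∀ i, x i - (((k:ℝ)-1)*(∑ j, a j) - a i)/((k:ℝ)^2-(k:ℝ)-1)
        = 1*(x i) + 0*(x i^2) + 0*(x i * a i)
          + (1/((k:ℝ)^2-(k:ℝ)-1))*(a i) + 0*(a i^2)
          + (-((((k:ℝ)-1)*(∑ j, a j))/((k:ℝ)^2-(k:ℝ)-1))) :=
      fun i => by ring
    rw [Finset.sum_congr rfl fun i _ => hterm i, sum_comb]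
    field_simp
    ring
  have hy2 : ∑ i, (x i - (((k:ℝ)-1)*(∑ j, a j) - a i)/((k:ℝ)^2-(k:ℝ)-1))^2
      = (∑ i, x i^2)
        - 2*((((k:ℝ)-1)*(∑ j, a j))/((k:ℝ)^2-(k:ℝ)-1))*(∑ i, x i)
        + 2*(1/((k:ℝ)^2-(k:ℝ)-1))*(∑ i, x i * a i)
        - 2*(((((k:ℝ)-1)*(∑ j, a j))/((k:ℝ)^2-(k:ℝ)-1))*(1/((k:ℝ)^2-(k:ℝ)-1)))*(∑ j, a j)
        + (1/((k:ℝ)^2-(k:ℝ)-1))^2*(∑ i, a i^2)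
        + (k:ℝ)*(((((k:ℝ)-1)*(∑ j, a j))/((k:ℝ)^2-(k:ℝ)-1))^2) := by
    have hterm : ∀ i, (x i - (((k:ℝ)-1)*(∑ j, a j) - a i)/((k:ℝ)^2-(k:ℝ)-1))^2
        = (-(2*((((k:ℝ)-1)*(∑ j, a j))/((k:ℝ)^2-(k:ℝ)-1))))*(x i)
          + 1*(x i^2)
          + (2*(1/((k:ℝ)^2-(k:ℝ)-1)))*(x i * a i)
          + (-(2*(((((k:ℝ)-1)*(∑ j, a j))/((k:ℝ)^2-(k:ℝ)-1))*(1/((k:ℝ)^2-(k:ℝ)-1)))))*(a i)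
          + ((1/((k:ℝ)^2-(k:ℝ)-1))^2)*(a i^2)
          + ((((k:ℝ)-1)*(∑ j, a j))/((k:ℝ)^2-(k:ℝ)-1))^2 :=
      fun i => by ring
    rw [Finset.sum_congr rfl fun i _ => hterm i, sum_comb]
    ring
  rw [energy1, hoff, hdd, hss, h0x, h0y, h0a, hy1, hy2]
  generalize hDd : ((k:ℝ)^2-(k:ℝ)-1) = D at *
  field_simp
  rw [← hDd]
  ring

/-- solution of the renormalization problem.
For every `a ∈ ℝ^k`, the minimum over `x ∈ ℝ^k` of `E₁(a, x)` equals
`(k(k-2)/(k²-k-1)) · E₀(a)`, and it is attained precisely at the point `x`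
with `x_i = ((k-1)·A - a_i)/(k²-k-1)` where `A = Σ_j a_j`. -/
theorem renormalization_problem {k : ℕ} (hk : 3 ≤ k) (a : Fin k → ℝ) :
    IsLeast (Set.range (energy1 k a))
      ((k : ℝ) * ((k : ℝ) - 2) / ((k : ℝ) ^ 2 - (k : ℝ) - 1) * energy0 k a) ∧
    ∀ x : Fin k → ℝ,
      energy1 k a x = (k : ℝ) * ((k : ℝ) - 2) / ((k : ℝ) ^ 2 - (k : ℝ) - 1) * energy0 k a ↔
        ∀ i : Fin k, x i = (((k : ℝ) - 1) * (∑ j, a j) - a i) / ((k : ℝ) ^ 2 - (k : ℝ) - 1) := by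
  have hk3 : (3:ℝ) ≤ (k:ℝ) := by exact_mod_cast hk
  have hD : ((k:ℝ)^2 - (k:ℝ) - 1) ≠ 0 := by nlinarith
  set xs : Fin k → ℝ :=
    fun i => (((k:ℝ)-1)*(∑ j, a j) - a i)/((k:ℝ)^2-(k:ℝ)-1) with hxs
  have keyx : ∀ x : Fin k → ℝ, energy1 k a x
      = (k:ℝ)*((k:ℝ)-2)/((k:ℝ)^2-(k:ℝ)-1) * energy0 k a
        + ((k:ℝ)-2) * energy0 k (fun i => x i - xs i)
        + ((k:ℝ)-1) * ∑ i, (x i - xs i)^2 :=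
    fun x => key_identity hD a x
  have hE0y : ∀ x : Fin k → ℝ,
      (0:ℝ) ≤ energy0 k (fun i => x i - xs i) :=
    fun x => Finset.sum_nonneg fun p _ => sq_nonneg _
  have hS : ∀ x : Fin k → ℝ, (0:ℝ) ≤ ∑ i, (x i - xs i)^2 :=
    fun x => Finset.sum_nonneg fun i _ => sq_nonneg _
  have hk2 : (0:ℝ) ≤ (k:ℝ) - 2 := by linarith
  have hk1 : (0:ℝ) < (k:ℝ) - 1 := by linarith
  have hvanish : energy1 k a xs
      = (k:ℝ)*((k:ℝ)-2)/((k:ℝ)^2-(k:ℝ)-1) * energy0 k a := by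
    rw [keyx xs]
    have h1 : energy0 k (fun i => xs i - xs i) = 0 := by
      simp [energy0]
    have h2 : ∑ i, (xs i - xs i)^2 = 0 := by simp
    rw [h1, h2]
    ring
  constructor
  · constructor
    · exact ⟨xs, hvanish⟩
    · rintro v ⟨x, rfl⟩
      rw [keyx x]
      have h1 := hE0y x
      have h2 := hS x
      nlinarith [mul_nonneg hk2 h1, mul_nonneg hk1.le h2]
  · intro x
    constructor
    · intro hx
      rw [keyx x] at hx
      have h1 := hE0y x
      have h2 := hS x
      have hsum0 : ∑ i, (x i - xs i)^2 = 0 := by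
        nlinarith [mul_nonneg hk2 h1]
      intro i
      have hz := (Finset.sum_eq_zero_iff_of_nonneg
        (fun i _ => sq_nonneg (x i - xs i))).1 hsum0 i (Finset.mem_univ i)
      have : x i - xs i = 0 := by
        have := sq_eq_zero_iff.1 hz
        exact this
      have hxi : x i = xs i := by linarith
      rw [hxi, hxs]
    · intro hx
      have hfe : x = xs := funext fun i => by rw [hx i, hxs]
      rw [hfe]
      exact hvanish

end HanoiGeo
end

section
/- Let k ≥ 3 and let G be a fully symmetric k-peg Hanoi group with generating set S such that every non-identity element of S has at least one inactive peg. If G is contracting, then S ⊆ S_{k,1} ∪ {1}; in particular G is a subgroup of H_c^{(k)}. -/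
/-!
Common framework: automorphisms of the rooted tree `X_k^*`, root permutations,
sections, self-similar and contracting groups, Hanoi automorphisms and Hanoi
groups, following Makisumi–Stadnyk–Steinhurst, "Modified Hanoi Towers Groups
and Limit Spaces".

A word `x_n … x_1` over the alphabet `X_k = Fin k` is encoded as the list
`[x_n, …, x_1]`, whose head `x_n` is the first letter, i.e. the letter that a
tree automorphism reads (and permutes) first.
-/

namespace Hanoi

/-- Words over the alphabet `X_k = Fin k`. -/
abbrev Word (k : ℕ) := List (Fin k)

/-- `e` is an automorphism of the rooted tree `X_k^*`: it fixes the root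
(the empty word), preserves word length (levels) and preserves the tree
structure (words sharing an initial segment of length `n` are sent to words
sharing an initial segment of length `n`). -/
def IsTreeAut {k : ℕ} (e : Equiv.Perm (Word k)) : Prop :=
  (∀ w : Word k, (e w).length = w.length) ∧
    ∀ (w v : Word k) (n : ℕ), w.take n = v.take n → (e w).take n = (e v).take n

open Classical in
/-- The root permutation `σ_e` of a tree automorphism `e` (its action on
one-letter words). -/
noncomputable def rootPerm {k : ℕ} (e : Equiv.Perm (Word k)) : Equiv.Perm (Fin k) :=
  if h : Function.Bijective (fun x : Fin k => ((e [x]).head?.getD x)) then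
    Equiv.ofBijective _ h
  else 1

open Classical in
/-- The section `e|_x` of `e` at a letter `x`: the unique automorphism with
`e (x :: w) = σ_e x :: (e|_x) w` for all words `w`. -/
noncomputable def sec {k : ℕ} (e : Equiv.Perm (Word k)) (x : Fin k) : Equiv.Perm (Word k) :=
  if h : Function.Bijective (fun w : Word k => (e (x :: w)).tail) then
    Equiv.ofBijective _ h
  else 1

/-- The section `e|_v` of `e` at a word `v = x_n … x_1`, defined by
`e|_v = (e|_{x_n})|_{x_{n-1} … x_1}`. -/
noncomputable def secW {k : ℕ} (e : Equiv.Perm (Word k)) : Word k → Equiv.Perm (Word k)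
  | [] => e
  | x :: v => secW (sec e x) v

/-- A subgroup of the permutations of `X_k^*` is self-similar if it consists of
tree automorphisms and is closed under taking sections. -/
def IsSelfSimilar {k : ℕ} (G : Subgroup (Equiv.Perm (Word k))) : Prop :=
  (∀ g ∈ G, IsTreeAut g) ∧ ∀ g ∈ G, ∀ x : Fin k, sec g x ∈ G

/-- A self-similar group `G` is contracting if there is a finite subset `N ⊆ G`
such that for every `g ∈ G` all sections of `g` at words of length at least
some `m` lie in `N`. -/
def IsContracting {k : ℕ} (G : Subgroup (Equiv.Perm (Word k))) : Prop :=
  ∃ N : Set (Equiv.Perm (Word k)), N.Finite ∧ N ⊆ (G : Set (Equiv.Perm (Word k))) ∧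
    ∀ g ∈ G, ∃ m : ℕ, ∀ v : Word k, m ≤ v.length → secW g v ∈ N

/-- `N` is the nucleus of `G`: a smallest finite subset of `G` catching all
deep enough sections of every element of `G`. -/
def IsNucleus {k : ℕ} (G : Subgroup (Equiv.Perm (Word k)))
    (N : Set (Equiv.Perm (Word k))) : Prop :=
  (N.Finite ∧ N ⊆ (G : Set (Equiv.Perm (Word k))) ∧
    ∀ g ∈ G, ∃ m : ℕ, ∀ v : Word k, m ≤ v.length → secW g v ∈ N) ∧
  ∀ N' : Set (Equiv.Perm (Word k)), N'.Finite → N' ⊆ (G : Set (Equiv.Perm (Word k))) →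
    (∀ g ∈ G, ∃ m : ℕ, ∀ v : Word k, m ≤ v.length → secW g v ∈ N') → N ⊆ N'

/-- `a` is a Hanoi automorphism with set of inactive pegs `Q`: the section at
each active peg (element of the complement of `Q`) is trivial, the section at
each inactive peg is `a` itself, and the root permutation fixes each inactive
peg. -/
def IsHanoiWith {k : ℕ} (a : Equiv.Perm (Word k)) (Q : Set (Fin k)) : Prop :=
  IsTreeAut a ∧ (∀ i ∉ Q, sec a i = 1) ∧ (∀ j ∈ Q, sec a j = a) ∧
    ∀ j ∈ Q, rootPerm a j = j

/-- `a` is a `k`-peg Hanoi automorphism. -/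
def IsHanoiAut {k : ℕ} (a : Equiv.Perm (Word k)) : Prop := ∃ Q, IsHanoiWith a Q

open Classical in
/-- The set `Q_a` of inactive pegs of a Hanoi automorphism `a`; by convention
`Q_1 = X_k` (for `a ≠ 1` the set of inactive pegs is uniquely determined). -/
noncomputable def inactivePegs {k : ℕ} (a : Equiv.Perm (Word k)) : Set (Fin k) :=
  if a = 1 then Set.univ
  else if h : ∃ Q, IsHanoiWith a Q then h.choose else ∅

/-- `S_{k,q}`: the set of Hanoi automorphisms over `X_k` with exactly `q`
inactive pegs. -/
noncomputable def hanoiSet (k q : ℕ) : Set (Equiv.Perm (Word k)) :=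
  {a | IsHanoiAut a ∧ (inactivePegs a).ncard = q}

/-- `L = [s_n, …, s_1]` is a representation of `g` over the generating set `S`:
each `s_i ∈ S ∪ S⁻¹` and `g = s_n ⋯ s_2 s_1`. -/
def IsRepOf {k : ℕ} (S : Set (Equiv.Perm (Word k))) (L : List (Equiv.Perm (Word k)))
    (g : Equiv.Perm (Word k)) : Prop :=
  (∀ s ∈ L, s ∈ S ∨ s⁻¹ ∈ S) ∧ L.prod = g

/-- The length `l(g)` of `g` with respect to `S`: the length of a minimal
representation (`0` for the identity). -/
noncomputable def repLength {k : ℕ} (S : Set (Equiv.Perm (Word k)))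
    (g : Equiv.Perm (Word k)) : ℕ :=
  sInf {n | ∃ L, IsRepOf S L g ∧ L.length = n}

/-- The essential set of a representation: the intersection of the sets of
inactive pegs of its letters. -/
noncomputable def essSet {k : ℕ} (L : List (Equiv.Perm (Word k))) : Set (Fin k) :=
  ⋂ s ∈ L, inactivePegs s

/-- The prenucleus of `G`: the set of elements `g ∈ G` with `g|_j = g` for some
letter `j`. -/
noncomputable def preNucleus {k : ℕ} (G : Subgroup (Equiv.Perm (Word k))) :
    Set (Equiv.Perm (Word k)) :=
  {g | g ∈ G ∧ ∃ j : Fin k, sec g j = g}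

/-- The underlying function of the Hanoi Towers move `a_{ij}`: it changes the
first occurrence of `i` or `j` in a word by means of the transposition `(i j)`
and leaves the rest of the word unchanged. -/
def hanoiMoveFun {k : ℕ} (i j : Fin k) : Word k → Word k
  | [] => []
  | x :: w => if x = i ∨ x = j then Equiv.swap i j x :: w else x :: hanoiMoveFun i j w

theorem hanoiMoveFun_involutive {k : ℕ} (i j : Fin k) :
    Function.Involutive (hanoiMoveFun i j) := by
  intro w
  induction w with
  | nil => rfl
  | cons x t ih =>
    by_cases h : x = i ∨ x = j
    · have h2 : Equiv.swap i j x = i ∨ Equiv.swap i j x = j := by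
        rcases h with h | h <;> subst h <;> simp
      simp only [hanoiMoveFun, if_pos h, if_pos h2, Equiv.swap_apply_self]
    · simp only [hanoiMoveFun, if_neg h, ih]

/-- The Hanoi Towers move `a_{ij}`, as a permutation of `X_k^*`: its root
permutation is the transposition `(i j)`, its sections at `i` and `j` are
trivial and all its other sections equal `a_{ij}` itself. -/
def hanoiMove {k : ℕ} (i j : Fin k) : Equiv.Perm (Word k) :=
  (hanoiMoveFun_involutive i j).toPerm

/-- The orbit of the letter `j` under the subgroup of `Sym(X_k)` generated by
the root permutations of the elements of `T`. -/
noncomputable def orbT {k : ℕ} (T : Finset (Equiv.Perm (Word k))) (j : Fin k) : Set (Fin k) :=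
  MulAction.orbit (Subgroup.closure ((fun a => rootPerm a) '' (T : Set (Equiv.Perm (Word k))))) j

/-- The set `Fix(T)` of letters fixed by the root permutation of every element
of `T`. -/
noncomputable def fixT {k : ℕ} (T : Finset (Equiv.Perm (Word k))) : Set (Fin k) :=
  {x | ∀ s ∈ T, rootPerm s x = x}

/-- Condition (*) on a generating set `S` of Hanoi automorphisms: for every
finite `T ⊆ S` with nonempty essential set and every letter `j ∉ Fix(T)`,
the orbit of `j` misses the inactive pegs of some element of `T`. -/
noncomputable def CondStar {k : ℕ} (S : Set (Equiv.Perm (Word k))) : Prop :=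
  ∀ T : Finset (Equiv.Perm (Word k)), (T : Set (Equiv.Perm (Word k))) ⊆ S →
    (⋂ s ∈ T, inactivePegs s).Nonempty →
    ∀ j : Fin k, j ∉ fixT T →
      ∃ s ∈ T, orbT T j ∩ inactivePegs s = ∅

open Classical in
/-- `d(g)`: the least number of distinct generators occurring among all
representations of `g` having nonempty essential set. -/
noncomputable def dCount {k : ℕ} (S : Set (Equiv.Perm (Word k)))
    (g : Equiv.Perm (Word k)) : ℕ :=
  sInf {M | ∃ L, IsRepOf S L g ∧ (essSet L).Nonempty ∧ L.toFinset.card = M}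

/-- `S` is fully symmetric: for every non-identity `a ∈ S` and every
`φ ∈ Sym(X_k)`, the Hanoi automorphism `φ·a` with inactive pegs `φ(Q_a)` and
root permutation `φ ∘ σ_a ∘ φ⁻¹` again lies in `S`. -/
noncomputable def FullySymmetric {k : ℕ} (S : Set (Equiv.Perm (Word k))) : Prop :=
  ∀ a ∈ S, a ≠ 1 → ∀ φ : Equiv.Perm (Fin k), ∀ b : Equiv.Perm (Word k),
    IsHanoiWith b (φ '' inactivePegs a) →
    rootPerm b = φ * rootPerm a * φ⁻¹ → b ∈ S

/-- The family `R̲_{k,n}`: the identity together with all Hanoi automorphisms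
`a` such that (1) `Q_a ⊆ {m+1, …, m+n}` for some `m`, and (2) whenever
`i ∈ Q_a` the root permutation of `a` fixes `i-1, …, i-(n-1)`
(all peg labels mod `k`). -/
noncomputable def Runder (k n : ℕ) : Set (Equiv.Perm (Word k)) :=
  {a | a = 1 ∨ (IsHanoiAut a ∧
    (∃ m : Fin k, ∀ q ∈ inactivePegs a, ∃ t : ℕ, 1 ≤ t ∧ t ≤ n ∧
      (q : ℕ) = ((m : ℕ) + t) % k) ∧
    ∀ i ∈ inactivePegs a, ∀ x : Fin k, ∀ t : ℕ, 1 ≤ t → t ≤ n - 1 →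
      ((x : ℕ) + t) % k = (i : ℕ) → rootPerm a x = x)}

/-- The family `R̄_{k,n}`: the identity together with all Hanoi automorphisms
`a` such that (1) `Q_a ⊆ {m+1, …, m+n}` for some `m`, and (2) whenever
`i ∈ Q_a` the root permutation of `a` fixes `i+1, …, i+(n-1)`
(all peg labels mod `k`). -/
noncomputable def Rover (k n : ℕ) : Set (Equiv.Perm (Word k)) :=
  {a | a = 1 ∨ (IsHanoiAut a ∧
    (∃ m : Fin k, ∀ q ∈ inactivePegs a, ∃ t : ℕ, 1 ≤ t ∧ t ≤ n ∧
      (q : ℕ) = ((m : ℕ) + t) % k) ∧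
    ∀ i ∈ inactivePegs a, ∀ x : Fin k, ∀ t : ℕ, 1 ≤ t → t ≤ n - 1 →
      (x : ℕ) = ((i : ℕ) + t) % k → rootPerm a x = x)}

/-- The finite word `x_m … x_1` (first letter `x_m`) read off from a
left-infinite sequence `… x_2 x_1`, encoded as `x : ℕ → Fin k` with
`x s = x_{s+1}`. -/
def wordOf {k : ℕ} (x : ℕ → Fin k) (m : ℕ) : Word k := (List.range m).reverse.map x


section AuxLemmas

variable {k : ℕ} {e g h : Equiv.Perm (Word k)}

private lemma head_single (he : IsTreeAut e) (x : Fin k) :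
    e [x] = [((e [x]).head?.getD x)] := by
  have hl : (e [x]).length = 1 := he.1 [x]
  match hm : e [x] with
  | [y] => simp
  | [] => rw [hm] at hl; simp at hl
  | y :: z :: t => rw [hm] at hl; simp at hl

private lemma head_bij (he : IsTreeAut e) :
    Function.Bijective (fun x : Fin k => ((e [x]).head?.getD x)) := by
  rw [Finite.injective_iff_bijective.symm]
  intro x y hxy
  simp only at hxy
  have : e [x] = e [y] := by rw [head_single he x, head_single he y, hxy]
  simpa using e.injective this

lemma apply_single (he : IsTreeAut e) (x : Fin k) : e [x] = [rootPerm e x] := by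
  rw [rootPerm, dif_pos (head_bij he)]
  exact head_single he x

lemma rootPerm_injective (he : IsTreeAut e) : Function.Injective (rootPerm e) := by
  intro x y hxy
  have : e [x] = e [y] := by rw [apply_single he, apply_single he, hxy]
  simpa using e.injective this

private lemma take_one (he : IsTreeAut e) (x : Fin k) (w : Word k) :
    e (x :: w) = rootPerm e x :: (e (x :: w)).tail := by
  have h1 : (e (x :: w)).take 1 = (e [x]).take 1 := he.2 (x :: w) [x] 1 rfl
  rw [apply_single he] at h1
  match hm : e (x :: w) with
  | [] => rw [hm] at h1; simp at h1
  | y :: t =>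
    rw [hm] at h1
    simp only [List.take_succ_cons, List.take_zero, List.take] at h1
    simp_all

private lemma tail_bij (he : IsTreeAut e) (x : Fin k) :
    Function.Bijective (fun w : Word k => (e (x :: w)).tail) := by
  constructor
  · intro w v hwv
    have : e (x :: w) = e (x :: v) := by
      rw [take_one he x w, take_one he x v]
      simpa using hwv
    simpa using e.injective this
  · intro u
    have hz : e (e.symm (rootPerm e x :: u)) = rootPerm e x :: u := e.apply_symm_apply _
    have hl : (e.symm (rootPerm e x :: u)).length = u.length + 1 := by
      have := he.1 (e.symm (rootPerm e x :: u))
      rw [hz] at this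
      simpa using this.symm
    match hm : e.symm (rootPerm e x :: u) with
    | [] => rw [hm] at hl; simp at hl
    | y :: w =>
      rw [hm] at hz
      have h1 := take_one he y w
      rw [hz] at h1
      have hy : rootPerm e y = rootPerm e x := by
        have := h1
        simp only [List.cons.injEq] at this
        exact this.1.symm
      have : y = x := rootPerm_injective he hy
      subst this
      refine ⟨w, ?_⟩
      have := h1
      simp only [List.cons.injEq] at this
      simp [hz]

lemma apply_cons (he : IsTreeAut e) (x : Fin k) (w : Word k) :
    e (x :: w) = rootPerm e x :: sec e x w := by
  rw [sec, dif_pos (tail_bij he x)]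
  exact take_one he x w

/-- Characterization of `rootPerm` and `sec` via the defining equation. -/
lemma sec_spec (he : IsTreeAut e) (x y : Fin k) (g : Equiv.Perm (Word k))
    (H : ∀ w, e (x :: w) = y :: g w) : rootPerm e x = y ∧ sec e x = g := by
  have h0 := (apply_cons he x []).symm.trans (H [])
  have hy : rootPerm e x = y := by
    simpa using (List.cons.injEq _ _ _ _ ▸ h0).1
  refine ⟨hy, Equiv.ext fun w => ?_⟩
  have := (apply_cons he x w).symm.trans (H w)
  rw [hy] at this
  simpa using this

lemma isTreeAut_one : IsTreeAut (1 : Equiv.Perm (Word k)) :=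
  ⟨fun _ => rfl, fun _ _ _ hw => hw⟩

lemma rootPerm_one : rootPerm (1 : Equiv.Perm (Word k)) = 1 := by
  apply Equiv.ext
  intro x
  exact (sec_spec isTreeAut_one x x 1 fun w => rfl).1

lemma sec_one (x : Fin k) : sec (1 : Equiv.Perm (Word k)) x = 1 :=
  (sec_spec isTreeAut_one x x 1 fun w => rfl).2

lemma IsTreeAut.mul (hg : IsTreeAut g) (hh : IsTreeAut h) : IsTreeAut (g * h) := by
  constructor
  · intro w; simp only [Equiv.Perm.mul_apply]; rw [hg.1, hh.1]
  · intro w v n hwv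
    simp only [Equiv.Perm.mul_apply]
    exact hg.2 _ _ n (hh.2 w v n hwv)

lemma mul_spec (hg : IsTreeAut g) (hh : IsTreeAut h) (x : Fin k) :
    rootPerm (g * h) x = rootPerm g (rootPerm h x) ∧
      sec (g * h) x = sec g (rootPerm h x) * sec h x := by
  refine sec_spec (hg.mul hh) x _ _ fun w => ?_
  simp only [Equiv.Perm.mul_apply]
  rw [apply_cons hh x w, apply_cons hg _ _]

lemma rootPerm_mul (hg : IsTreeAut g) (hh : IsTreeAut h) :
    rootPerm (g * h) = rootPerm g * rootPerm h := by
  apply Equiv.ext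
  intro x
  exact (mul_spec hg hh x).1

lemma sec_mul (hg : IsTreeAut g) (hh : IsTreeAut h) (x : Fin k) :
    sec (g * h) x = sec g (rootPerm h x) * sec h x := (mul_spec hg hh x).2

lemma IsTreeAut.pow (hg : IsTreeAut g) (m : ℕ) : IsTreeAut (g ^ m) := by
  induction m with
  | zero => simpa using isTreeAut_one
  | succ n ih => rw [pow_succ]; exact ih.mul hg

lemma rootPerm_pow (hg : IsTreeAut g) (m : ℕ) : rootPerm (g ^ m) = rootPerm g ^ m := by
  induction m with
  | zero => simpa using rootPerm_one
  | succ n ih => rw [pow_succ, rootPerm_mul (hg.pow n) hg, ih, pow_succ]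

lemma sec_pow (hg : IsTreeAut g) (x : Fin k) (hx : rootPerm g x = x) (m : ℕ) :
    sec (g ^ m) x = (sec g x) ^ m := by
  induction m with
  | zero => simpa using sec_one x
  | succ n ih =>
    rw [pow_succ, sec_mul (hg.pow n) hg, hx, ih, pow_succ]

lemma secW_cons (x : Fin k) (v : Word k) : secW e (x :: v) = secW (sec e x) v := rfl

lemma secW_replicate {j : Fin k} (hj : sec e j = e) :
    ∀ m, secW e (List.replicate m j) = e := by
  intro m
  induction m with
  | zero => rfl
  | succ n ih => rw [List.replicate_succ, secW_cons, hj, ih]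



variable {k : ℕ}

open Classical in
noncomputable def hfun (Q : Set (Fin k)) (σ : Equiv.Perm (Fin k)) : Word k → Word k
  | [] => []
  | x :: w => if x ∈ Q then x :: hfun Q σ w else σ x :: w

variable {Q : Set (Fin k)} {σ : Equiv.Perm (Fin k)}

lemma not_mem_of_fix (hfix : ∀ j ∈ Q, σ j = j) {x : Fin k} (hx : x ∉ Q) : σ x ∉ Q := by
  intro hsx
  have h1 : σ (σ x) = σ x := hfix _ hsx
  have := σ.injective h1
  exact hx (this ▸ hsx)

lemma fix_inv (hfix : ∀ j ∈ Q, σ j = j) : ∀ j ∈ Q, σ⁻¹ j = j := by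
  intro j hj
  have h := hfix j hj
  nth_rewrite 1 [← h]
  simp

lemma hfun_inv (hfix : ∀ j ∈ Q, σ j = j) :
    ∀ w, hfun Q σ⁻¹ (hfun Q σ w) = w := by
  intro w
  induction w with
  | nil => simp [hfun]
  | cons x w ih =>
    by_cases hx : x ∈ Q
    · simp only [hfun, if_pos hx, ih]
    · have hsx : σ x ∉ Q := not_mem_of_fix hfix hx
      simp only [hfun, if_neg hx, if_neg hsx]
      simp

open Classical in
noncomputable def hperm (Q : Set (Fin k)) (σ : Equiv.Perm (Fin k))
    (hfix : ∀ j ∈ Q, σ j = j) : Equiv.Perm (Word k) where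
  toFun := hfun Q σ
  invFun := hfun Q σ⁻¹
  left_inv := hfun_inv hfix
  right_inv := by
    have h := hfun_inv (σ := σ⁻¹) (fix_inv hfix)
    intro w; simpa using h w

variable (hfix : ∀ j ∈ Q, σ j = j)

lemma hperm_apply (w : Word k) : hperm Q σ hfix w = hfun Q σ w := rfl

lemma hperm_aut : IsTreeAut (hperm Q σ hfix) := by
  constructor
  · intro w
    rw [hperm_apply]
    induction w with
    | nil => rfl
    | cons x w ih =>
      by_cases hx : x ∈ Q
      · simp only [hfun, if_pos hx, List.length_cons, ih]
      · simp only [hfun, if_neg hx, List.length_cons]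
  · intro w
    induction w with
    | nil =>
      intro v n hv
      have : v.take n = [] := hv.symm.trans (by simp)
      rcases List.take_eq_nil_iff.1 this with h | h
      · subst h; simp
      · subst h; simp
    | cons x w ih =>
      intro v n hv
      cases n with
      | zero => simp
      | succ n =>
        cases v with
        | nil => simp at hv
        | cons y v =>
          simp only [List.take_succ_cons, List.cons.injEq] at hv
          obtain ⟨rfl, htake⟩ := hv
          by_cases hx : x ∈ Q
          · simp only [hperm_apply, hfun, if_pos hx, List.take_succ_cons, List.cons.injEq]
            refine ⟨trivial, ?_⟩
            exact ih v n htake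
          · simp only [hperm_apply, hfun, if_neg hx, List.take_succ_cons, List.cons.injEq]
            refine ⟨trivial, ?_⟩
            exact htake

lemma hperm_spec_mem {x : Fin k} (hx : x ∈ Q) :
    rootPerm (hperm Q σ hfix) x = x ∧ sec (hperm Q σ hfix) x = hperm Q σ hfix := by
  refine sec_spec (hperm_aut hfix) x x _ fun w => ?_
  simp only [hperm_apply, hfun, if_pos hx]

lemma hperm_spec_not_mem {x : Fin k} (hx : x ∉ Q) :
    rootPerm (hperm Q σ hfix) x = σ x ∧ sec (hperm Q σ hfix) x = 1 := by
  refine sec_spec (hperm_aut hfix) x (σ x) 1 fun w => ?_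
  simp only [hperm_apply, hfun, if_neg hx, Equiv.Perm.one_apply]

lemma rootPerm_hperm : rootPerm (hperm Q σ hfix) = σ := by
  apply Equiv.ext
  intro x
  by_cases hx : x ∈ Q
  · rw [(hperm_spec_mem hfix hx).1, hfix x hx]
  · exact (hperm_spec_not_mem hfix hx).1

lemma isHanoiWith_hperm : IsHanoiWith (hperm Q σ hfix) Q :=
  ⟨hperm_aut hfix, fun _ hi => (hperm_spec_not_mem hfix hi).2,
    fun _ hj => (hperm_spec_mem hfix hj).2, fun _ hj => (hperm_spec_mem hfix hj).1⟩

section Part3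
variable {k : ℕ}

lemma rootPerm_three {c : Equiv.Perm (Word k)} (hc : IsTreeAut c) {u v w : Fin k}
    (hvu : v ≠ u) (hwu : w ≠ u)
    (h1 : rootPerm c u = v) (h2 : rootPerm c v = w) (h3 : rootPerm c w = u) :
    ∀ m, rootPerm (c ^ m) u = u → 3 ∣ m := by
  have hτ3 : ((rootPerm c) ^ 3) u = u := by
    show rootPerm c (rootPerm c (rootPerm c u)) = u
    rw [h1, h2, h3]
  have hmul : ∀ s, ((rootPerm c) ^ (3 * s)) u = u := by
    intro s
    induction s with
    | zero => simp
    | succ n ih =>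
      have : 3 * (n + 1) = 3 * n + 3 := by ring
      rw [this, pow_add, Equiv.Perm.mul_apply, hτ3, ih]
  intro m hm
  rw [rootPerm_pow hc] at hm
  have hdecomp : m = 3 * (m / 3) + m % 3 := (Nat.div_add_mod m 3).symm
  have hr : ((rootPerm c) ^ (m % 3)) u = u := by
    have : ((rootPerm c) ^ m) u = ((rootPerm c) ^ (m % 3)) (((rootPerm c) ^ (3 * (m / 3))) u) := by
      nth_rewrite 1 [hdecomp]
      rw [add_comm, pow_add, Equiv.Perm.mul_apply]
    rw [hmul] at this
    rw [← this, hm]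
  have hlt : m % 3 < 3 := Nat.mod_lt _ (by norm_num)
  interval_cases h : m % 3
  · omega
  · rw [pow_one, h1] at hr; exact absurd hr hvu
  · have : rootPerm c (rootPerm c u) = u := hr
    rw [h1, h2] at this; exact absurd this hwu

lemma orbit_three {c : Equiv.Perm (Word k)} (hc : IsTreeAut c) {u v w : Fin k}
    (hvu : v ≠ u) (hwu : w ≠ u)
    (h1 : rootPerm c u = v) (h2 : rootPerm c v = w) (h3 : rootPerm c w = u)
    (hsec : sec (c ^ 3) u = c) :
    ∀ n m, (c ^ m) (List.replicate n u) = List.replicate n u → 3 ^ n ∣ m := by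
  intro n
  induction n with
  | zero => intro m _; simp
  | succ n ih =>
    intro m hm
    rw [List.replicate_succ, apply_cons (hc.pow m)] at hm
    have hhead : rootPerm (c ^ m) u = u := by
      have := congrArg List.head? hm; simpa using this
    have htail : sec (c ^ m) u (List.replicate n u) = List.replicate n u := by
      have := congrArg List.tail hm; simpa using this
    obtain ⟨s, rfl⟩ := rootPerm_three hc hvu hwu h1 h2 h3 m hhead
    have hsecm : sec (c ^ (3 * s)) u = c ^ s := by
      rw [pow_mul, sec_pow (hc.pow 3) u ?hfix, hsec]
      case hfix =>
        rw [rootPerm_pow hc]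
        show rootPerm c (rootPerm c (rootPerm c u)) = u
        rw [h1, h2, h3]
    rw [hsecm] at htail
    have := ih s htail
    calc 3 ^ (n + 1) = 3 * 3 ^ n := by ring
    _ ∣ 3 * s := mul_dvd_mul_left 3 this

lemma eq_one_of_rootPerm_id {a : Equiv.Perm (Word k)} {Q : Set (Fin k)}
    (ha : IsHanoiWith a Q) (h : ∀ x, rootPerm a x = x) : a = 1 := by
  apply Equiv.ext
  intro w
  induction w with
  | nil =>
    have h0 : (a []).length = 0 := ha.1.1 []
    simpa using List.length_eq_zero_iff.1 h0
  | cons x w ih =>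
    rw [apply_cons ha.1, h x]
    by_cases hx : x ∈ Q
    · rw [ha.2.2.1 x hx]
      simpa using ih
    · rw [ha.2.1 x hx]
      simp

end Part3

end AuxLemmas

/-- Theorem: `H_c^{(k)}` is the unique maximal fully
symmetric contracting Hanoi group.
Let `k ≥ 3` and let `G` be a fully symmetric `k`-peg Hanoi group whose
non-identity generators all have at least one inactive peg.  If `G` is
contracting then every generator lies in `S_{k,1} ∪ {1}`; in particular `G`
is a subgroup of `H_c^{(k)}`. -/
theorem fully_symmetric_contracting_subgroup_Hc {k : ℕ} (hk : 3 ≤ k)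
    (S : Set (Equiv.Perm (Word k)))
    (hS1 : (1 : Equiv.Perm (Word k)) ∈ S) (hS : ∀ a ∈ S, IsHanoiAut a)
    (hQ : ∀ a ∈ S, a ≠ 1 → (inactivePegs a).Nonempty)
    (hsym : FullySymmetric S)
    (hc : IsContracting (Subgroup.closure S)) :
    S ⊆ hanoiSet k 1 ∪ {1} ∧
      Subgroup.closure S ≤ Subgroup.closure (hanoiSet k 1 ∪ {1}) := by
  classical
  have main : S ⊆ hanoiSet k 1 ∪ {1} := by
    intro a ha
    by_cases ha1 : a = 1
    · exact Or.inr (Set.mem_singleton_iff.2 ha1)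
    refine Or.inl ⟨hS a ha, ?_⟩
    have hex : ∃ Q, IsHanoiWith a Q := hS a ha
    have hQa : IsHanoiWith a (inactivePegs a) := by
      unfold inactivePegs
      rw [if_neg ha1, dif_pos hex]
      exact hex.choose_spec
    set Q : Set (Fin k) := inactivePegs a with hQdef
    have hQne : Q.Nonempty := hQ a ha ha1
    have hfin : Q.Finite := Q.toFinite
    by_contra hcard
    have hlt : 1 < Q.ncard := by
      have h0 : 0 < Q.ncard := (Set.ncard_pos hfin).2 hQne
      omega
    obtain ⟨j1, j2, hj1, hj2, hne⟩ := (Set.one_lt_ncard_iff hfin).1 hlt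
    set σ : Equiv.Perm (Fin k) := rootPerm a with hσdef
    have hfix : ∀ j ∈ Q, σ j = j := hQa.2.2.2
    have hσfixinv : ∀ j ∈ Q, σ⁻¹ j = j := fix_inv hfix
    -- a moved point
    obtain ⟨p, hp⟩ : ∃ p, σ p ≠ p := by
      by_contra hfixall
      push_neg at hfixall
      exact ha1 (eq_one_of_rootPerm_id hQa hfixall)
    set q : Fin k := σ p with hqdef
    have hqp : q ≠ p := hp
    have hpQ : p ∉ Q := by
      intro hmem
      apply hp
      rw [hqdef, hfix p hmem]
    have hqQ : q ∉ Q := not_mem_of_fix hfix hpQ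
    have hσq : σ q ≠ q := by
      intro hq
      apply hqp
      apply σ.injective
      rw [hq, hqdef]
    have hj2p : j2 ≠ p := fun h => hpQ (by rw [← h]; exact hj2)
    have hj2q : j2 ≠ q := fun h => hqQ (by rw [← h]; exact hj2)
    have hj1j2 : j1 ≠ j2 := hne
    have hj1p : j1 ≠ p := fun h => hpQ (by rw [← h]; exact hj1)
    have hj1q : j1 ≠ q := fun h => hqQ (by rw [← h]; exact hj1)
    have hσqQ : σ q ∉ Q := not_mem_of_fix hfix hqQ
    -- construct φ with the required partial data
    obtain ⟨φ, hφ1, hφ2, hφp, hφq, r, hrQ, hrp, hφr⟩ :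
        ∃ φ : Equiv.Perm (Fin k), φ j1 = j1 ∧ φ j2 = p ∧ φ p = q ∧ φ q = j2 ∧
          ∃ r, r ∉ Q ∧ σ r = p ∧ φ (σ q) = r := by
      set cyc : Equiv.Perm (Fin k) := Equiv.swap j2 q * Equiv.swap j2 p with hcyc
      have hcj1 : cyc j1 = j1 := by
        rw [hcyc, Equiv.Perm.mul_apply, Equiv.swap_apply_of_ne_of_ne hj1j2 hj1p,
          Equiv.swap_apply_of_ne_of_ne hj1j2 hj1q]
      have hcj2 : cyc j2 = p := by
        rw [hcyc, Equiv.Perm.mul_apply, Equiv.swap_apply_left,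
          Equiv.swap_apply_of_ne_of_ne (Ne.symm hj2p) (Ne.symm hqp)]
      have hcp : cyc p = q := by
        rw [hcyc, Equiv.Perm.mul_apply, Equiv.swap_apply_right, Equiv.swap_apply_left]
      have hcq : cyc q = j2 := by
        rw [hcyc, Equiv.Perm.mul_apply, Equiv.swap_apply_of_ne_of_ne (Ne.symm hj2q) hqp,
          Equiv.swap_apply_right]
      by_cases hA : σ q = p
      · exact ⟨cyc, hcj1, hcj2, hcp, hcq, q, hqQ, hA, by rw [hA, hcp]⟩
      have hsqj2 : σ q ≠ j2 := fun h => hσqQ (by rw [h]; exact hj2)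
      by_cases hB : σ (σ q) = p
      · refine ⟨cyc, hcj1, hcj2, hcp, hcq, σ q, hσqQ, hB, ?_⟩
        rw [hcyc, Equiv.Perm.mul_apply,
          Equiv.swap_apply_of_ne_of_ne hsqj2 hA,
          Equiv.swap_apply_of_ne_of_ne hsqj2 hσq]
      · set t : Fin k := σ⁻¹ p with htdef
        have hσt : σ t = p := by rw [htdef]; simp
        have htQ : t ∉ Q := by
          intro hmem
          have := hfix t hmem
          rw [hσt] at this
          exact hpQ (this ▸ hmem)
        have htp : t ≠ p := by
          intro h
          have h2 := hσt
          rw [h] at h2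
          exact hqp (hqdef.trans h2)
        have htq : t ≠ q := by
          intro h
          apply hA
          rw [← h, hσt]
        have htj2 : t ≠ j2 := fun h => htQ (by rw [h]; exact hj2)
        have hst : σ q ≠ t := by
          intro h
          apply hB
          rw [h, hσt]
        have hsp : σ q ≠ p := hA
        refine ⟨cyc * Equiv.swap (σ q) t, ?_, ?_, ?_, ?_, t, htQ, hσt, ?_⟩
        · have e1 : j1 ≠ σ q := fun h => hσqQ (by rw [← h]; exact hj1)
          have e2 : j1 ≠ t := fun h => htQ (by rw [← h]; exact hj1)
          rw [Equiv.Perm.mul_apply, Equiv.swap_apply_of_ne_of_ne e1 e2, hcj1]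
        · rw [Equiv.Perm.mul_apply,
            Equiv.swap_apply_of_ne_of_ne (Ne.symm hsqj2) (Ne.symm htj2), hcj2]
        · rw [Equiv.Perm.mul_apply,
            Equiv.swap_apply_of_ne_of_ne (Ne.symm hsp) (Ne.symm htp), hcp]
        · rw [Equiv.Perm.mul_apply,
            Equiv.swap_apply_of_ne_of_ne (Ne.symm hσq) (Ne.symm htq), hcq]
        · rw [Equiv.Perm.mul_apply, Equiv.swap_apply_left, hcyc, Equiv.Perm.mul_apply,
            Equiv.swap_apply_of_ne_of_ne htj2 htp, Equiv.swap_apply_of_ne_of_ne htj2 htq]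
    -- the conjugated generator b
    set σ' : Equiv.Perm (Fin k) := φ * σ * φ⁻¹ with hσ'def
    have hσ'apply : ∀ x, σ' x = φ (σ (φ⁻¹ x)) := fun x => rfl
    have hfix' : ∀ x ∈ φ '' Q, σ' x = x := by
      rintro _ ⟨x, hx, rfl⟩
      rw [hσ'apply]
      simp [hfix x hx]
    set b : Equiv.Perm (Word k) := hperm (φ '' Q) σ' hfix' with hbdef
    have hb : IsHanoiWith b (φ '' Q) := isHanoiWith_hperm hfix'
    have hbroot : rootPerm b = σ' := rootPerm_hperm hfix'
    have hbS : b ∈ S := hsym a ha ha1 φ b hb (by rw [hbroot, hσ'def, hσdef])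
    -- membership facts
    have hj1' : j1 ∈ φ '' Q := ⟨j1, hj1, hφ1⟩
    have hp' : p ∈ φ '' Q := ⟨j2, hj2, hφ2⟩
    have hj2' : j2 ∉ φ '' Q := by
      rintro ⟨x, hx, hxe⟩
      have : x = q := φ.injective (hxe.trans hφq.symm)
      exact hqQ (this ▸ hx)
    have hq' : q ∉ φ '' Q := by
      rintro ⟨x, hx, hxe⟩
      have : x = p := φ.injective (hxe.trans hφp.symm)
      exact hpQ (this ▸ hx)
    -- σ' values
    have hφinvj2 : φ⁻¹ j2 = q := by
      rw [← hφq]; simp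
    have hφinvq : φ⁻¹ q = p := by
      rw [← hφp]; simp
    have hσ'j2 : σ' j2 = r := by rw [hσ'apply, hφinvj2, hφr]
    have hσ'q : σ' q = j2 := by rw [hσ'apply, hφinvq, ← hqdef, hφq]
    have hσ'p : σ' p = p := hfix' p hp'
    have hσ'j1 : σ' j1 = j1 := hfix' j1 hj1'
    -- the element c
    set c : Equiv.Perm (Word k) := a * b with hcdef
    have ha_aut : IsTreeAut a := hQa.1
    have hb_aut : IsTreeAut b := hb.1
    have hc_aut : IsTreeAut c := ha_aut.mul hb_aut
    have hrootb : ∀ x, rootPerm b x = σ' x := fun x => by rw [hbroot]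
    have hτ : ∀ x, rootPerm c x = σ (σ' x) := fun x => by
      rw [hcdef, rootPerm_mul ha_aut hb_aut, Equiv.Perm.mul_apply, hrootb, hσdef]
    have hτj2 : rootPerm c j2 = p := by rw [hτ, hσ'j2, hrp]
    have hτp : rootPerm c p = q := by rw [hτ, hσ'p, hqdef]
    have hτq : rootPerm c q = j2 := by rw [hτ, hσ'q, hfix j2 hj2]
    have hτj1 : rootPerm c j1 = j1 := by rw [hτ, hσ'j1, hfix j1 hj1]
    have hsecc : ∀ x, sec c x = sec a (σ' x) * sec b x := fun x => by
      rw [hcdef, sec_mul ha_aut hb_aut, hrootb]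
    have hseccj1 : sec c j1 = c := by
      rw [hsecc, hσ'j1, hQa.2.2.1 j1 hj1, hb.2.2.1 j1 hj1', hcdef]
    have hseccj2 : sec c j2 = 1 := by
      rw [hsecc, hσ'j2, hQa.2.1 r hrQ, hb.2.1 j2 hj2', one_mul]
    have hseccp : sec c p = b := by
      rw [hsecc, hσ'p, hQa.2.1 p hpQ, hb.2.2.1 p hp', one_mul]
    have hseccq : sec c q = a := by
      rw [hsecc, hσ'q, hQa.2.2.1 j2 hj2, hb.2.1 q hq', mul_one]
    -- sec (c^3) j2 = c
    have hc3 : c ^ 3 = c * c * c := by rw [pow_succ, pow_two]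
    have hsec3 : sec (c ^ 3) j2 = c := by
      rw [hc3, sec_mul (hc_aut.mul hc_aut) hc_aut, hτj2, hseccj2, mul_one,
        sec_mul hc_aut hc_aut, hτp, hseccq, hseccp, hcdef]
    have horb := orbit_three hc_aut (Ne.symm hj2p) (Ne.symm hj2q) hτj2 hτp hτq hsec3
    -- c has infinite order
    have hpow_ne : ∀ d, 0 < d → c ^ d ≠ 1 := by
      intro d hd h1
      have h3 : 3 ^ d ∣ d := horb d d (by rw [h1]; simp)
      have hle : 3 ^ d ≤ d := Nat.le_of_dvd hd h3
      have hgt : d < 3 ^ d := Nat.lt_pow_self (by norm_num)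
      omega
    -- all powers of c lie in the nucleus set N
    obtain ⟨N, hNfin, _, hNsec⟩ := hc
    have haG : a ∈ Subgroup.closure S := Subgroup.subset_closure ha
    have hbG : b ∈ Subgroup.closure S := Subgroup.subset_closure hbS
    have hcG : c ∈ Subgroup.closure S := by rw [hcdef]; exact mul_mem haG hbG
    have hmemN : ∀ t : ℕ, c ^ (t + 1) ∈ N := by
      intro t
      obtain ⟨m, hm⟩ := hNsec _ (pow_mem hcG (t + 1))
      have hmm := hm (List.replicate m j1) (by simp)
      have hsect : sec (c ^ (t + 1)) j1 = c ^ (t + 1) := by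
        rw [sec_pow hc_aut j1 hτj1, hseccj1]
      rw [secW_replicate hsect] at hmm
      exact hmm
    have hinj : Function.Injective (fun t : ℕ => c ^ (t + 1)) := by
      have key : ∀ s t : ℕ, s < t → c ^ (s + 1) = c ^ (t + 1) → False := by
        intro s t hst heq
        have : c ^ (s + 1) * c ^ (t - s) = c ^ (t + 1) := by
          rw [← pow_add]; congr 1; omega
        rw [← heq, mul_eq_left] at this
        exact hpow_ne (t - s) (by omega) this
      intro s t hst
      simp only at hst
      rcases lt_trichotomy s t with h | h | h
      · exact (key s t h hst).elim
      · exact h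
      · exact (key t s h hst.symm).elim
    exact Set.infinite_of_injective_forall_mem hinj hmemN hNfin
  exact ⟨main, Subgroup.closure_mono main⟩


end Hanoi
end
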